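/- arXiv:1509.05119 — 7 statements merged into one kernel-verified Lean document; each statement's English description precedes it below -/
import Mathlib

section
/- Let C : ℝ → ℝ be a convex nonnegative function with lim_{x→+∞} C(x) = 0 and lim_{x→-∞} (C(x) + x) = l for some real l. Then there exists a unique integrable probability measure ν on ℝ such that C(x) = ∫ (y-x)⁺ ν(dy) for all x, and moreover ∫ y ν(dy) = l. -/
open MeasureTheory Set Filter
open scoped ENNReal

noncomputable def rdv (C : ℝ → ℝ) (x : ℝ) : ℝ := sInf (slope C x '' Ioi x)

section basic
variable {C : ℝ → ℝ} {l : ℝ}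

lemma monoD (hconv : ConvexOn ℝ Set.univ C)
    (hbot : Tendsto (fun x => C x + x) atBot (nhds l)) :
    Monotone (fun x => C x + x) := by
  set D : ℝ → ℝ := fun x => C x + x with hD
  have hconvD : ConvexOn ℝ Set.univ D := hconv.add (convexOn_id convex_univ)
  intro a b hab
  rcases eq_or_lt_of_le hab with rfl | hab'
  · exact le_rfl
  by_contra h
  push_neg at h
  set c : ℝ := (D b - D a) / (b - a) with hcdef
  have hc : c < 0 := div_neg_of_neg_of_pos (by linarith) (by linarith)
  have hbound : ∀ t, t < a → D a - c * a + c * t ≤ D t := by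
    intro t ht
    have := hconvD.slope_mono_adjacent (mem_univ t) (mem_univ b) ht hab'
    rw [div_le_iff₀ (by linarith : (0:ℝ) < a - t), ← hcdef, mul_sub] at this
    linarith
  have htop' : Tendsto D atBot atTop := by
    apply tendsto_atTop_mono' atBot ((eventually_lt_atBot a).mono fun t ht => hbound t ht)
    apply tendsto_atTop_add_const_left
    exact (tendsto_const_mul_atTop_of_neg hc).2 tendsto_id
  exact not_tendsto_nhds_of_tendsto_atTop htop' l hbot

lemma antiC (hconv : ConvexOn ℝ Set.univ C)
    (htop : Tendsto C atTop (nhds 0)) : Antitone C := by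
  intro a b hab
  rcases eq_or_lt_of_le hab with rfl | hab'
  · exact le_rfl
  by_contra h
  push_neg at h
  set c : ℝ := (C b - C a) / (b - a) with hcdef
  have hc : 0 < c := div_pos (by linarith) (by linarith)
  have hbound : ∀ u, b < u → C b - c * b + c * u ≤ C u := by
    intro u hu
    have := hconv.slope_mono_adjacent (mem_univ a) (mem_univ u) hab' hu
    rw [le_div_iff₀ (by linarith : (0:ℝ) < u - b), ← hcdef, mul_sub] at this
    linarith
  have htop' : Tendsto C atTop atTop := by
    apply tendsto_atTop_mono' atTop ((eventually_gt_atTop b).mono fun u hu => hbound u hu)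
    apply tendsto_atTop_add_const_left
    exact (tendsto_const_mul_atTop_of_pos hc).2 tendsto_id
  exact not_tendsto_nhds_of_tendsto_atTop htop' 0 htop

end basic
section rd
variable {C : ℝ → ℝ} {l : ℝ}

lemma slope_nonpos (hC : Antitone C) {x y : ℝ} (hxy : x < y) : slope C x y ≤ 0 := by
  rw [slope_def_field]
  exact div_nonpos_of_nonpos_of_nonneg (by linarith [hC hxy.le]) (by linarith)

lemma neg_one_le_slope (hD : Monotone (fun x => C x + x)) {x y : ℝ} (hxy : x < y) :
    -1 ≤ slope C x y := by
  rw [slope_def_field, le_div_iff₀ (by linarith : (0:ℝ) < y - x)]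
  have := hD hxy.le
  simp only at this
  linarith

lemma slope_monoOn (hconv : ConvexOn ℝ Set.univ C) (x : ℝ) :
    MonotoneOn (slope C x) (Ioi x) := by
  intro a ha b hb hab
  rw [slope_def_field, slope_def_field]
  exact hconv.secant_mono (mem_univ x) (mem_univ a) (mem_univ b)
    (ne_of_gt ha) (ne_of_gt hb) hab

lemma slope_mono_left (hconv : ConvexOn ℝ Set.univ C) {x x' y : ℝ} (h1 : x ≤ x') (h2 : x' < y) :
    slope C x y ≤ slope C x' y := by
  rw [slope_comm C x y, slope_comm C x' y, slope_def_field, slope_def_field]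
  exact hconv.secant_mono (mem_univ y) (mem_univ x) (mem_univ x')
    (ne_of_lt (lt_of_le_of_lt h1 h2)) (ne_of_lt h2) h1

lemma bddBelow_slopes (hD : Monotone (fun x => C x + x)) (x : ℝ) :
    BddBelow (slope C x '' Ioi x) := by
  refine ⟨-1, ?_⟩
  rintro - ⟨y, hy, rfl⟩
  exact neg_one_le_slope hD hy

lemma rdv_le_slope (hD : Monotone (fun x => C x + x)) {x y : ℝ} (hxy : x < y) :
    rdv C x ≤ slope C x y :=
  csInf_le (bddBelow_slopes hD x) (mem_image_of_mem _ hxy)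

lemma le_rdv {c x : ℝ} (h : ∀ y, x < y → c ≤ slope C x y) : c ≤ rdv C x :=
  le_csInf (Nonempty.image _ (nonempty_Ioi)) (by rintro - ⟨y, hy, rfl⟩; exact h y hy)

lemma neg_one_le_rdv (hD : Monotone (fun x => C x + x)) (x : ℝ) : -1 ≤ rdv C x :=
  le_rdv fun y hy => neg_one_le_slope hD hy

lemma rdv_nonpos (hC : Antitone C) (hD : Monotone (fun x => C x + x)) (x : ℝ) :
    rdv C x ≤ 0 :=
  (rdv_le_slope hD (lt_add_one x)).trans (slope_nonpos hC (lt_add_one x))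

lemma rdv_mono (hconv : ConvexOn ℝ Set.univ C) (hD : Monotone (fun x => C x + x)) :
    Monotone (rdv C) := by
  intro x x' hxx'
  rcases eq_or_lt_of_le hxx' with rfl | h
  · exact le_rfl
  refine le_rdv fun y hy => ?_
  exact (rdv_le_slope hD (h.trans hy)).trans (slope_mono_left hconv hxx' hy)

lemma hasDerivWithinAt_rdv (hconv : ConvexOn ℝ Set.univ C) (hD : Monotone (fun x => C x + x))
    (x : ℝ) : HasDerivWithinAt C (rdv C x) (Ioi x) x := by
  rw [hasDerivWithinAt_iff_tendsto_slope]
  rw [Set.diff_singleton_eq_self (by simp : x ∉ Ioi x)]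
  exact MonotoneOn.tendsto_nhdsGT (slope_monoOn hconv x) (bddBelow_slopes hD x)

end rd
section rc
variable {C : ℝ → ℝ} {l : ℝ}

lemma rdv_right_continuous (hconv : ConvexOn ℝ Set.univ C) (hD : Monotone (fun x => C x + x))
    (hcont : Continuous C) (x : ℝ) : Tendsto (rdv C) (nhdsWithin x (Ioi x)) (nhds (rdv C x)) := by
  have h1 := Monotone.tendsto_nhdsGT (rdv_mono hconv hD) x
  have hbdd : BddBelow (rdv C '' Ioi x) := by
    refine ⟨rdv C x, ?_⟩
    rintro - ⟨y, hy, rfl⟩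
    exact rdv_mono hconv hD (le_of_lt hy)
  have h2 : sInf (rdv C '' Ioi x) = rdv C x := by
    apply le_antisymm
    · apply le_rdv
      intro u hu
      have htend : Tendsto (fun s => slope C s u) (nhdsWithin x (Ioi x)) (nhds (slope C x u)) := by
        simp only [slope_def_field]
        apply Tendsto.mono_left _ nhdsWithin_le_nhds
        exact (continuousAt_const.sub hcont.continuousAt).div
          (continuousAt_const.sub continuousAt_id) (sub_ne_zero.2 (ne_of_gt hu))
      refine ge_of_tendsto htend ?_
      filter_upwards [Ioo_mem_nhdsGT_of_mem (⟨le_refl x, hu⟩ : x ∈ Ico x u)] with s hs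
      exact le_trans (csInf_le hbdd (mem_image_of_mem _ hs.1)) (rdv_le_slope hD hs.2)
    · apply le_csInf ((nonempty_Ioi).image _)
      rintro - ⟨y, hy, rfl⟩
      exact rdv_mono hconv hD (le_of_lt hy)
  rwa [h2] at h1

lemma rdv_tendsto_atTop (hconv : ConvexOn ℝ Set.univ C) (hC : Antitone C)
    (hD : Monotone (fun x => C x + x)) (htop : Tendsto C atTop (nhds 0)) :
    Tendsto (rdv C) atTop (nhds 0) := by
  have hlow : ∀ x : ℝ, C x - C (x - 1) ≤ rdv C x := by
    intro x
    apply le_rdv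
    intro y hy
    have h := hconv.slope_mono_adjacent (mem_univ (x - 1)) (mem_univ y)
      (by linarith : x - 1 < x) hy
    have hs : (C x - C (x - 1)) / (x - (x - 1)) = C x - C (x - 1) := by
      rw [sub_sub_cancel, div_one]
    rw [hs] at h
    rw [slope_def_field]
    exact h
  have hlowt : Tendsto (fun x : ℝ => C x - C (x - 1)) atTop (nhds 0) := by
    have h2 : Tendsto (fun x : ℝ => C (x - 1)) atTop (nhds 0) :=
      htop.comp (tendsto_atTop_add_const_right atTop (-1) tendsto_id)
    simpa using htop.sub h2
  exact tendsto_of_tendsto_of_tendsto_of_le_of_le hlowt tendsto_const_nhds hlow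
    (fun x => rdv_nonpos hC hD x)

lemma rdv_tendsto_atBot (hconv : ConvexOn ℝ Set.univ C) (hD : Monotone (fun x => C x + x))
    (hbot : Tendsto (fun x => C x + x) atBot (nhds l)) :
    Tendsto (rdv C) atBot (nhds (-1)) := by
  have hup : ∀ x : ℝ, rdv C x ≤ C (x + 1) - C x := by
    intro x
    have := rdv_le_slope hD (lt_add_one x)
    rwa [slope_def_field, add_sub_cancel_left, div_one] at this
  have hupt : Tendsto (fun x : ℝ => C (x + 1) - C x) atBot (nhds (-1)) := by
    have h2 : Tendsto (fun x : ℝ => (C (x + 1) + (x + 1)) - (C x + x)) atBot (nhds (l - l)) :=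
      (hbot.comp (tendsto_atBot_add_const_right atBot 1 tendsto_id)).sub hbot
    have h3 : (fun x : ℝ => (C (x + 1) + (x + 1)) - (C x + x))
        = fun x : ℝ => (C (x + 1) - C x) + 1 := by ext x; ring
    rw [h3, sub_self] at h2
    have := h2.sub_const 1
    simpa using this
  exact tendsto_of_tendsto_of_tendsto_of_le_of_le tendsto_const_nhds hupt
    (fun x => neg_one_le_rdv hD x) hup

end rc
section ftc
variable {C : ℝ → ℝ} {l : ℝ}

lemma key_top (hconv : ConvexOn ℝ Set.univ C) (hC : Antitone C)
    (hD : Monotone (fun x => C x + x)) (hcont : Continuous C)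
    (htop : Tendsto C atTop (nhds 0)) (x : ℝ) :
    ∫⁻ t in Ioi x, ENNReal.ofReal (-(rdv C t)) = ENNReal.ofReal (C x) := by
  have hmeas : Measurable (rdv C) := (rdv_mono hconv hD).measurable
  have cover : AECover (volume.restrict (Ioi x)) atTop (fun n : ℕ => Ioc x (x + n)) := by
    constructor
    · filter_upwards [ae_restrict_mem measurableSet_Ioi] with t ht
      filter_upwards [eventually_ge_atTop ⌈t - x⌉₊] with n hn
      exact ⟨ht, by linarith [Nat.ceil_le.1 hn]⟩
    · exact fun n => measurableSet_Ioc
  refine cover.lintegral_eq_of_tendsto _ hmeas.neg.ennreal_ofReal.aemeasurable ?_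
  have hres : ∀ n : ℕ, ∫⁻ t in Ioc x (x + n), ENNReal.ofReal (-(rdv C t))
      ∂(volume.restrict (Ioi x)) = ENNReal.ofReal (C x - C (x + n)) := by
    intro n
    rw [Measure.restrict_restrict measurableSet_Ioc,
      inter_eq_self_of_subset_left Ioc_subset_Ioi_self]
    have hle : x ≤ x + n := le_add_of_nonneg_right n.cast_nonneg
    have hftc : ∫ t in x..(x + n), rdv C t = C (x + n) - C x :=
      intervalIntegral.integral_eq_sub_of_hasDeriv_right_of_le hle
        hcont.continuousOn (fun t _ => hasDerivWithinAt_rdv hconv hD t)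
        ((rdv_mono hconv hD).intervalIntegrable)
    have hint : IntegrableOn (rdv C) (Ioc x (x + n)) volume :=
      (intervalIntegrable_iff_integrableOn_Ioc_of_le hle).1
        ((rdv_mono hconv hD).intervalIntegrable)
    have hint' : IntegrableOn (fun t => -(rdv C t)) (Ioc x (x + n)) volume := hint.neg
    rw [← ofReal_integral_eq_lintegral_ofReal hint'
      (ae_of_all _ fun t => neg_nonneg.2 (rdv_nonpos hC hD t))]
    congr 1
    rw [integral_neg, ← intervalIntegral.integral_of_le hle, hftc]
    ring
  simp only [hres]
  apply ENNReal.tendsto_ofReal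
  have h2 : Tendsto (fun n : ℕ => C (x + n)) atTop (nhds 0) :=
    htop.comp (tendsto_atTop_add_const_left atTop x tendsto_natCast_atTop_atTop)
  simpa using tendsto_const_nhds.sub h2

lemma key_bot (hconv : ConvexOn ℝ Set.univ C) (hD : Monotone (fun x => C x + x))
    (hcont : Continuous C) (hbot : Tendsto (fun x => C x + x) atBot (nhds l)) (x : ℝ) :
    ∫⁻ t in Iio x, ENNReal.ofReal (rdv C t + 1) = ENNReal.ofReal (C x + x - l) := by
  have hmeas : Measurable (rdv C) := (rdv_mono hconv hD).measurable
  have cover : AECover (volume.restrict (Iio x)) atTop (fun n : ℕ => Ioc (x - n) x) := by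
    constructor
    · filter_upwards [ae_restrict_mem measurableSet_Iio] with t ht
      filter_upwards [eventually_gt_atTop ⌈x - t⌉₊] with n hn
      have h1 := Nat.le_ceil (x - t)
      have h2 : ((⌈x - t⌉₊ : ℝ)) < n := Nat.cast_lt.2 hn
      exact ⟨by linarith, ht.le⟩
    · exact fun n => measurableSet_Ioc
  refine cover.lintegral_eq_of_tendsto _
    ((hmeas.add_const 1).ennreal_ofReal.aemeasurable) ?_
  have hres : ∀ n : ℕ, ∫⁻ t in Ioc (x - n) x, ENNReal.ofReal (rdv C t + 1)
      ∂(volume.restrict (Iio x)) = ENNReal.ofReal ((C x + x) - (C (x - n) + (x - n))) := by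
    intro n
    rw [Measure.restrict_restrict measurableSet_Ioc]
    have hIoc : Ioc (x - n) x ∩ Iio x = Ioo (x - n) x := by
      ext t; simp only [mem_inter_iff, mem_Ioc, mem_Iio, mem_Ioo]; constructor
      · rintro ⟨⟨h1, _⟩, h3⟩; exact ⟨h1, h3⟩
      · rintro ⟨h1, h2⟩; exact ⟨⟨h1, h2.le⟩, h2⟩
    rw [hIoc]
    have hle : x - n ≤ x := by linarith [n.cast_nonneg (α := ℝ)]
    have hftc : ∫ t in (x - n)..x, (rdv C t + 1) = (C x + x) - (C (x - n) + (x - n)) :=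
      intervalIntegral.integral_eq_sub_of_hasDeriv_right_of_le hle
        (hcont.add continuous_id).continuousOn
        (fun t _ => (hasDerivWithinAt_rdv hconv hD t).add (hasDerivWithinAt_id t _))
        (((rdv_mono hconv hD).add_const 1).intervalIntegrable)
    have hint : IntegrableOn (fun t => rdv C t + 1) (Ioo (x - n) x) volume := by
      apply IntegrableOn.mono_set _ Ioo_subset_Ioc_self
      exact (intervalIntegrable_iff_integrableOn_Ioc_of_le hle).1
        (((rdv_mono hconv hD).add_const 1).intervalIntegrable)
    have hnn : ∀ t, (0:ℝ) ≤ rdv C t + 1 := fun t => by linarith [neg_one_le_rdv hD t]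
    rw [← ofReal_integral_eq_lintegral_ofReal hint (ae_of_all _ hnn)]
    congr 1
    rw [← MeasureTheory.integral_Ioc_eq_integral_Ioo, ← intervalIntegral.integral_of_le hle, hftc]
  simp only [hres]
  apply ENNReal.tendsto_ofReal
  have h2 : Tendsto (fun n : ℕ => C (x - n) + (x - n)) atTop (nhds l) := by
    have hneg : Tendsto (fun n : ℕ => -(n:ℝ)) atTop atBot :=
      tendsto_neg_atBot_iff.2 tendsto_natCast_atTop_atTop
    have h3 : Tendsto (fun n : ℕ => x - (n:ℝ)) atTop atBot := by
      simpa [sub_eq_add_neg] using tendsto_atBot_add_const_left atTop x hneg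
    exact hbot.comp h3
  simpa using tendsto_const_nhds.sub h2

end ftc
lemma ofReal_max_zero (a : ℝ) : ENNReal.ofReal (max a 0) = ENNReal.ofReal a := by
  rcases le_total a 0 with h | h
  · simp [max_eq_right h, ENNReal.ofReal_eq_zero.2 h]
  · rw [max_eq_left h]

lemma lint_pos_part (μ : Measure ℝ) [IsFiniteMeasure μ] (x : ℝ) :
    ∫⁻ y, ENNReal.ofReal (y - x) ∂μ = ∫⁻ t in Ici x, μ (Ioi t) := by
  have h1 : ∀ y : ℝ, ENNReal.ofReal (y - x) = ∫⁻ t, (Ico x y).indicator 1 t := by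
    intro y
    rw [lintegral_indicator_one measurableSet_Ico, Real.volume_Ico]
  simp_rw [h1]
  rw [lintegral_lintegral_swap]
  · rw [← lintegral_indicator measurableSet_Ici]
    apply lintegral_congr
    intro t
    by_cases hxt : x ≤ t
    · have h2 : ∀ y, (Ico x y).indicator (1 : ℝ → ℝ≥0∞) t = (Ioi t).indicator 1 y := by
        intro y
        simp only [Set.indicator_apply, mem_Ico, mem_Ioi, Pi.one_apply]
        split_ifs <;> tauto
      simp_rw [h2]
      rw [lintegral_indicator_one measurableSet_Ioi, indicator_of_mem (mem_Ici.2 hxt)]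
    · have h2 : ∀ y, (Ico x y).indicator (1 : ℝ → ℝ≥0∞) t = 0 := by
        intro y
        simp only [Set.indicator_apply, mem_Ico, Pi.one_apply]
        split_ifs <;> tauto
      simp_rw [h2]
      rw [indicator_of_notMem (by simpa using hxt)]
      simp
  · have hS : MeasurableSet {p : ℝ × ℝ | x ≤ p.2 ∧ p.2 < p.1} :=
      ((measurable_snd measurableSet_Ici).inter (measurableSet_lt measurable_snd measurable_fst))
    have he : (Function.uncurry fun y t => (Ico x y).indicator (1 : ℝ → ℝ≥0∞) t)
        = ({p : ℝ × ℝ | x ≤ p.2 ∧ p.2 < p.1}).indicator 1 := by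
      funext p
      obtain ⟨y, t⟩ := p
      simp only [Function.uncurry_apply_pair, Set.indicator_apply, mem_Ico, mem_setOf_eq,
        Pi.one_apply]
    rw [he]
    exact (measurable_one.indicator hS).aemeasurable

lemma lint_neg_part (μ : Measure ℝ) [IsFiniteMeasure μ] (x : ℝ) :
    ∫⁻ y, ENNReal.ofReal (x - y) ∂μ = ∫⁻ t in Iio x, μ (Iic t) := by
  have h1 : ∀ y : ℝ, ENNReal.ofReal (x - y) = ∫⁻ t, (Ico y x).indicator 1 t := by
    intro y
    rw [lintegral_indicator_one measurableSet_Ico, Real.volume_Ico]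
  simp_rw [h1]
  rw [lintegral_lintegral_swap]
  · rw [← lintegral_indicator measurableSet_Iio]
    apply lintegral_congr
    intro t
    by_cases hxt : t < x
    · have h2 : ∀ y, (Ico y x).indicator (1 : ℝ → ℝ≥0∞) t = (Iic t).indicator 1 y := by
        intro y
        simp only [Set.indicator_apply, mem_Ico, mem_Iic, Pi.one_apply]
        split_ifs <;> tauto
      simp_rw [h2]
      rw [lintegral_indicator_one measurableSet_Iic, indicator_of_mem (mem_Iio.2 hxt)]
    · have h2 : ∀ y, (Ico y x).indicator (1 : ℝ → ℝ≥0∞) t = 0 := by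
        intro y
        simp only [Set.indicator_apply, mem_Ico, Pi.one_apply]
        split_ifs <;> tauto
      simp_rw [h2]
      rw [indicator_of_notMem (by simpa using hxt)]
      simp
  · have hS : MeasurableSet {p : ℝ × ℝ | p.1 ≤ p.2 ∧ p.2 < x} :=
      ((measurableSet_le measurable_fst measurable_snd).inter (measurable_snd measurableSet_Iio))
    have he : (Function.uncurry fun y t => (Ico y x).indicator (1 : ℝ → ℝ≥0∞) t)
        = ({p : ℝ × ℝ | p.1 ≤ p.2 ∧ p.2 < x}).indicator 1 := by
      funext p
      obtain ⟨y, t⟩ := p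
      simp only [Function.uncurry_apply_pair, Set.indicator_apply, mem_Ico, mem_setOf_eq,
        Pi.one_apply]
    rw [he]
    exact (measurable_one.indicator hS).aemeasurable
lemma ioi_le_of_lint_eq {μ1 μ2 : Measure ℝ}
    (hfin : ∀ x : ℝ, ∫⁻ t in Ici x, μ1 (Ioi t) ≠ ⊤)
    (heq : ∀ x : ℝ, ∫⁻ t in Ici x, μ1 (Ioi t) = ∫⁻ t in Ici x, μ2 (Ioi t))
    (t : ℝ) : μ1 (Ioi t) ≤ μ2 (Ioi t) := by
  have hanti1 : Antitone (fun s : ℝ => μ1 (Ioi s)) :=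
    fun a b hab => measure_mono (Ioi_subset_Ioi hab)
  have hIco : ∀ a b : ℝ, a ≤ b →
      ∫⁻ s in Ico a b, μ1 (Ioi s) = ∫⁻ s in Ico a b, μ2 (Ioi s) := by
    intro a b hab
    have hsplit : ∀ μ : Measure ℝ,
        ∫⁻ s in Ici a, μ (Ioi s) = (∫⁻ s in Ico a b, μ (Ioi s)) + ∫⁻ s in Ici b, μ (Ioi s) := by
      intro μ
      rw [← Ico_union_Ici_eq_Ici hab, lintegral_union measurableSet_Ici
        (disjoint_left.mpr fun s hs hs' => absurd (mem_Ici.1 hs') (not_le.2 hs.2))]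
    have h := heq a
    rw [hsplit μ1, hsplit μ2, heq b] at h
    have hYfin : ∫⁻ s in Ici b, μ2 (Ioi s) ≠ ⊤ := by rw [← heq b]; exact hfin b
    exact (ENNReal.add_left_inj hYfin).1 h
  have key : ∀ n : ℕ, μ1 (Ioi (t + 1 / (n + 1))) ≤ μ2 (Ioi t) := by
    intro n
    set e : ℝ := 1 / (n + 1) with he
    have he0 : 0 < e := by positivity
    have hvol : volume (Ico t (t + e)) = ENNReal.ofReal e := by
      rw [Real.volume_Ico, add_sub_cancel_left]
    have hlow : μ1 (Ioi (t + e)) * ENNReal.ofReal e ≤ ∫⁻ s in Ico t (t + e), μ1 (Ioi s) := by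
      rw [← hvol, ← setLIntegral_const]
      exact setLIntegral_mono hanti1.measurable
        (fun s hs => measure_mono (Ioi_subset_Ioi hs.2.le))
    have hhigh : ∫⁻ s in Ico t (t + e), μ2 (Ioi s) ≤ μ2 (Ioi t) * ENNReal.ofReal e := by
      rw [← hvol, ← setLIntegral_const]
      exact setLIntegral_mono measurable_const
        (fun s hs => measure_mono (Ioi_subset_Ioi hs.1))
    have hchain := hlow.trans ((hIco t (t + e) (by linarith)).le.trans hhigh)
    exact (ENNReal.mul_le_mul_iff_left (ENNReal.ofReal_pos.2 he0).ne' ENNReal.ofReal_ne_top).1 hchain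
  have hmonoS : Monotone (fun n : ℕ => Ioi (t + 1 / ((n : ℝ) + 1))) := by
    intro n m hnm
    apply Ioi_subset_Ioi
    have hc : (n : ℝ) ≤ m := Nat.cast_le.2 hnm
    have : (1 : ℝ) / (m + 1) ≤ 1 / (n + 1) :=
      one_div_le_one_div_of_le (by positivity) (by linarith)
    linarith
  have hU : ⋃ n : ℕ, Ioi (t + 1 / ((n : ℝ) + 1)) = Ioi t := by
    ext s
    simp only [mem_iUnion, mem_Ioi]
    constructor
    · rintro ⟨n, hn⟩
      have : (0:ℝ) < 1 / ((n:ℝ) + 1) := by positivity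
      linarith
    · intro hs
      obtain ⟨n, hn⟩ := exists_nat_one_div_lt (by linarith : (0:ℝ) < s - t)
      exact ⟨n, by linarith⟩
  calc μ1 (Ioi t) = μ1 (⋃ n : ℕ, Ioi (t + 1 / ((n : ℝ) + 1))) := by rw [hU]
    _ = ⨆ n : ℕ, μ1 (Ioi (t + 1 / ((n : ℝ) + 1))) :=
        hmonoS.measure_iUnion
    _ ≤ μ2 (Ioi t) := iSup_le key
/-- A convex nonnegative function `C` tending to `0` at `+∞` and with `C(x) + x → l` at `-∞`
is the integrated survival function of a unique integrable probability measure `ν`,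
whose mean is `l`. -/
theorem exists_unique_measure_of_integratedSurvival (C : ℝ → ℝ) (l : ℝ)
    (hconv : ConvexOn ℝ Set.univ C)
    (hnonneg : ∀ x : ℝ, 0 ≤ C x)
    (htop : Tendsto C atTop (nhds 0))
    (hbot : Tendsto (fun x => C x + x) atBot (nhds l)) :
    ∃! ν : Measure ℝ,
      IsProbabilityMeasure ν ∧
      Integrable (fun y : ℝ => y) ν ∧
      (∀ x : ℝ, C x = ∫ y, max (y - x) 0 ∂ν) ∧
      (∫ y, y ∂ν) = l := by
  have hC : Antitone C := antiC hconv htop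
  have hD : Monotone (fun x => C x + x) := monoD hconv hbot
  have hcont : Continuous C := hconv.locallyLipschitz.continuous
  set g := rdv C with hgdef
  have hgm : Monotone g := rdv_mono hconv hD
  set F : StieltjesFunction ℝ :=
    { toFun := fun x => g x + 1
      mono' := fun a b hab => by simpa using hgm hab
      right_continuous' := fun x => by
        rw [← continuousWithinAt_Ioi_iff_Ici]
        exact Tendsto.add_const 1 (rdv_right_continuous hconv hD hcont x) } with hFdef
  have hFbot : Tendsto F atBot (nhds 0) := by
    have := (rdv_tendsto_atBot hconv hD hbot).add_const 1
    simpa using this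
  have hFtop : Tendsto F atTop (nhds 1) := by
    have := (rdv_tendsto_atTop hconv hC hD htop).add_const 1
    simpa using this
  set ν := F.measure with hν
  have hprob : IsProbabilityMeasure ν := F.isProbabilityMeasure hFbot hFtop
  have hIic : ∀ t, ν (Iic t) = ENNReal.ofReal (g t + 1) := by
    intro t
    rw [F.measure_Iic hFbot]
    norm_num
    rfl
  have hIoi : ∀ t, ν (Ioi t) = ENNReal.ofReal (-(g t)) := by
    intro t
    have h1 : ν (Ioi t) = ν univ - ν (Iic t) := by
      rw [← compl_Iic, measure_compl measurableSet_Iic (measure_ne_top ν _)]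
    rw [h1, measure_univ, hIic t, ← ENNReal.ofReal_one,
      ← ENNReal.ofReal_sub _ (by linarith [neg_one_le_rdv hD t] : (0:ℝ) ≤ g t + 1)]
    norm_num
  have hLpos : ∀ x, ∫⁻ y, ENNReal.ofReal (y - x) ∂ν = ENNReal.ofReal (C x) := by
    intro x
    rw [lint_pos_part ν x, setLIntegral_congr (Ioi_ae_eq_Ici (a := x)).symm]
    simp_rw [hIoi]
    exact key_top hconv hC hD hcont htop x
  have hCint : ∀ x, ∫ y, max (y - x) 0 ∂ν = C x := by
    intro x
    have hm : AEStronglyMeasurable (fun y : ℝ => max (y - x) 0) ν :=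
      (Continuous.aestronglyMeasurable (by fun_prop))
    have heq := integral_eq_lintegral_of_nonneg_ae (μ := ν) (f := fun y : ℝ => max (y - x) 0)
      (ae_of_all _ fun y => le_max_right _ _) hm
    rw [heq]
    simp_rw [ofReal_max_zero]
    rw [hLpos x, ENNReal.toReal_ofReal (hnonneg x)]
  have hDl : ∀ x, l ≤ C x + x := by
    intro x
    refine le_of_tendsto hbot ?_
    filter_upwards [eventually_le_atBot x] with t ht
    simpa using hD ht
  have hLneg : ∀ x, ∫⁻ y, ENNReal.ofReal (x - y) ∂ν = ENNReal.ofReal (C x + x - l) := by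
    intro x
    rw [lint_neg_part ν x]
    simp_rw [hIic]
    exact key_bot hconv hD hcont hbot x
  have hMint : ∀ x, ∫ y, max (x - y) 0 ∂ν = C x + x - l := by
    intro x
    have hm : AEStronglyMeasurable (fun y : ℝ => max (x - y) 0) ν :=
      (Continuous.aestronglyMeasurable (by fun_prop))
    have heq := integral_eq_lintegral_of_nonneg_ae (μ := ν) (f := fun y : ℝ => max (x - y) 0)
      (ae_of_all _ fun y => le_max_right _ _) hm
    rw [heq]
    simp_rw [ofReal_max_zero]
    rw [hLneg x, ENNReal.toReal_ofReal (by linarith [hDl x])]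
  have hyInt : Integrable (fun y : ℝ => y) ν := by
    refine ⟨measurable_id.aestronglyMeasurable, ?_⟩
    rw [hasFiniteIntegral_iff_norm]
    have hpt : ∀ y : ℝ, ENNReal.ofReal ‖y‖ ≤
        ENNReal.ofReal (y - 0) + ENNReal.ofReal (0 - y) := by
      intro y
      rcases le_total 0 y with h | h
      · rw [Real.norm_eq_abs, abs_of_nonneg h]
        exact le_add_right (by simp [ENNReal.ofReal_le_ofReal_iff, h])
      · rw [Real.norm_eq_abs, abs_of_nonpos h]
        refine le_add_left (ENNReal.ofReal_le_ofReal (by linarith))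
    calc ∫⁻ y, ENNReal.ofReal ‖y‖ ∂ν
        ≤ ∫⁻ y, (ENNReal.ofReal (y - 0) + ENNReal.ofReal (0 - y)) ∂ν :=
          lintegral_mono hpt
      _ = (∫⁻ y, ENNReal.ofReal (y - 0) ∂ν) + ∫⁻ y, ENNReal.ofReal (0 - y) ∂ν :=
          lintegral_add_left ((measurable_id.sub_const (0:ℝ)).ennreal_ofReal) _
      _ < ⊤ := by
          rw [hLpos 0, hLneg 0]
          exact ENNReal.add_lt_top.2 ⟨ENNReal.ofReal_lt_top, ENNReal.ofReal_lt_top⟩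
  have hmean : ∫ y, y ∂ν = l := by
    have hi1 : Integrable (fun y : ℝ => max (y - 0) 0) ν :=
      (hyInt.sub (integrable_const (0:ℝ))).pos_part
    have hi2 : Integrable (fun y : ℝ => max (0 - y) 0) ν :=
      ((integrable_const (0:ℝ)).sub hyInt).pos_part
    have hsub : ∫ y, (max (y - 0) 0 - max (0 - y) 0) ∂ν = (C 0) - (C 0 + 0 - l) := by
      rw [integral_sub hi1 hi2, hCint 0, hMint 0]
    have hptw : ∀ y : ℝ, max (y - 0) 0 - max (0 - y) 0 = y := by
      intro y
      rw [sub_zero, zero_sub]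
      exact max_zero_sub_max_neg_zero_eq_self y
    simp_rw [hptw] at hsub
    rw [hsub]
    ring
  refine ⟨ν, ⟨hprob, hyInt, fun x => (hCint x).symm, hmean⟩, ?_⟩
  rintro ν' ⟨hprob', hyInt', hC', -⟩
  haveI := hprob'
  have base : ∀ (μ : Measure ℝ), IsProbabilityMeasure μ → Integrable (fun y : ℝ => y) μ →
      (∀ x, C x = ∫ y, max (y - x) 0 ∂μ) →
      ∀ x, ∫⁻ t in Ici x, μ (Ioi t) = ENNReal.ofReal (C x) := by
    intro μ hPμ hIμ hCμ x
    haveI := hPμ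
    rw [← lint_pos_part μ x]
    have hInt2 : Integrable (fun y : ℝ => max (y - x) 0) μ :=
      (hIμ.sub (integrable_const x)).pos_part
    have h3 := ofReal_integral_eq_lintegral_ofReal hInt2
      (ae_of_all _ fun y => le_max_right _ _)
    rw [← hCμ x] at h3
    simp_rw [ofReal_max_zero] at h3
    exact h3.symm
  have b1 := base ν hprob hyInt (fun x => (hCint x).symm)
  have b2 := base ν' hprob' hyInt' hC'
  have heq : ∀ x, ∫⁻ t in Ici x, ν (Ioi t) = ∫⁻ t in Ici x, ν' (Ioi t) := by
    intro x; rw [b1 x, b2 x]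
  have hfin : ∀ x, ∫⁻ t in Ici x, ν (Ioi t) ≠ ⊤ := by
    intro x; rw [b1 x]; exact ENNReal.ofReal_ne_top
  have hfin' : ∀ x, ∫⁻ t in Ici x, ν' (Ioi t) ≠ ⊤ := by
    intro x; rw [b2 x]; exact ENNReal.ofReal_ne_top
  have hIoiEq : ∀ t, ν' (Ioi t) = ν (Ioi t) := fun t =>
    le_antisymm (ioi_le_of_lint_eq hfin' (fun x => (heq x).symm) t)
      (ioi_le_of_lint_eq hfin heq t)
  refine Measure.ext_of_Iic ν' ν fun a => ?_
  have h1 : ν' (Iic a) = ν' univ - ν' (Ioi a) := by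
    rw [← compl_Ioi, measure_compl measurableSet_Ioi (measure_ne_top _ _)]
  have h2 : ν (Iic a) = ν univ - ν (Ioi a) := by
    rw [← compl_Ioi, measure_compl measurableSet_Ioi (measure_ne_top _ _)]
  rw [h1, h2, hIoiEq, measure_univ, measure_univ]
end

section
/- Let (X_t)_{t≥0} be a family of integrable real random variables with constant mean E[X_t] = m for all t. Then t ↦ E[ψ(X_t)] is non-decreasing for every convex ψ : ℝ → ℝ (with values in (-∞, +∞]) if and only if for every x ∈ ℝ the map t ↦ E[(X_t - x)⁺] is non-decreasing. -/
open MeasureTheory Set Finset Filter Topology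

set_option maxHeartbeats 1000000


/-- Every convex function on ℝ has a subgradient at every point. -/
lemma exists_subgradient' (ψ : ℝ → ℝ) (hψ : ConvexOn ℝ Set.univ ψ) (x : ℝ) :
    ∃ c : ℝ, ∀ y, ψ x + c * (y - x) ≤ ψ y := by
  set S : Set ℝ := (fun z => (ψ x - ψ z) / (x - z)) '' Iio x with hS
  have hne : S.Nonempty := ⟨_, ⟨x - 1, by simp [hS], rfl⟩⟩
  have hbdd : BddAbove S := by
    refine ⟨(ψ (x + 1) - ψ x) / (x + 1 - x), ?_⟩
    rintro v ⟨z, hz, rfl⟩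
    exact hψ.slope_mono_adjacent (mem_univ z) (mem_univ (x+1)) hz (by linarith)
  refine ⟨sSup S, fun y => ?_⟩
  rcases lt_trichotomy y x with h | h | h
  · have hy : (ψ x - ψ y) / (x - y) ≤ sSup S := le_csSup hbdd ⟨y, h, rfl⟩
    have hxy : (0:ℝ) < x - y := by linarith
    have := mul_le_mul_of_nonneg_right hy hxy.le
    rw [div_mul_cancel₀] at this
    · nlinarith [this]
    · exact hxy.ne'
  · simp [h]
  · have hy : sSup S ≤ (ψ y - ψ x) / (y - x) := by
      apply csSup_le hne
      rintro v ⟨z, hz, rfl⟩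
      exact hψ.slope_mono_adjacent (mem_univ z) (mem_univ y) hz h
    have hxy : (0:ℝ) < y - x := by linarith
    have := mul_le_mul_of_nonneg_right hy hxy.le
    rw [div_mul_cancel₀] at this
    · nlinarith [this]
    · exact hxy.ne'


lemma sup'_range_succ' (f : ℕ → ℝ) (k : ℕ) :
    (Finset.range (k+2)).sup' Finset.nonempty_range_add_one f
      = max ((Finset.range (k+1)).sup' Finset.nonempty_range_add_one f) (f (k+1)) := by
  apply le_antisymm
  · apply Finset.sup'_le
    intro j hj
    rcases Nat.lt_succ_iff_lt_or_eq.mp (Finset.mem_range.mp hj) with h | h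
    · exact le_trans (Finset.le_sup' f (Finset.mem_range.mpr h)) (le_max_left _ _)
    · subst h; exact le_max_right _ _
  · exact max_le
      (Finset.sup'_le _ _ fun j hj => Finset.le_sup' f
        (Finset.mem_range.mpr (Nat.lt_succ_of_lt (Finset.mem_range.mp hj))))
      (Finset.le_sup' f (Finset.self_mem_range_succ (k+1)))

/-- If lines `L i` satisfy `L (i+1) y = L i y + γ i * (y - b i)` with `γ i ≥ 0`, then to the
right of all crossing points `b i`, the max of the first `k+1` lines is the last line. -/
lemma sup_lines_right (L : ℕ → ℝ → ℝ) (γ b : ℕ → ℝ) (hγ : ∀ i, 0 ≤ γ i)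
    (hrec : ∀ i y, L (i+1) y = L i y + γ i * (y - b i)) :
    ∀ k y, (∀ i < k, b i ≤ y) →
      (Finset.range (k+1)).sup' Finset.nonempty_range_add_one (fun j => L j y) = L k y := by
  intro k
  induction k with
  | zero => intro y _; simp
  | succ k ih =>
    intro y hy
    rw [sup'_range_succ']
    have h1 : (Finset.range (k+1)).sup' Finset.nonempty_range_add_one (fun j => L j y) = L k y :=
      ih y (fun i hi => hy i (Nat.lt_succ_of_lt hi))
    rw [h1, hrec k y]
    have hbk : b k ≤ y := hy k (Nat.lt_succ_self k)
    have : 0 ≤ γ k * (y - b k) := mul_nonneg (hγ k) (by linarith)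
    rw [max_eq_right (by linarith)]

/-- Decomposition of the max of lines with nondecreasing slopes and crossings as an affine
function plus a nonnegative combination of call payoffs. -/
lemma sup_lines_eq' (L : ℕ → ℝ → ℝ) (γ b : ℕ → ℝ) (hγ : ∀ i, 0 ≤ γ i) (hb : Monotone b)
    (hrec : ∀ i y, L (i+1) y = L i y + γ i * (y - b i)) :
    ∀ k y, (Finset.range (k+1)).sup' Finset.nonempty_range_add_one (fun j => L j y)
      = L 0 y + ∑ i ∈ Finset.range k, γ i * max (y - b i) 0 := by
  intro k
  induction k with
  | zero => intro y; simp
  | succ k ih =>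
    intro y
    rw [sup'_range_succ', ih y, Finset.sum_range_succ]
    rcases le_or_gt (b k) y with hbk | hbk
    · have h1 : (Finset.range (k+1)).sup' Finset.nonempty_range_add_one (fun j => L j y) = L k y :=
        sup_lines_right L γ b hγ hrec k y (fun i hi => le_trans (hb hi.le) hbk)
      have h2 : L (k+1) y = L k y + γ k * (y - b k) := hrec k y
      rw [ih y] at h1
      have : 0 ≤ γ k * (y - b k) := mul_nonneg (hγ k) (by linarith)
      rw [h2, ← h1, max_eq_right (by linarith), max_eq_left (by linarith)]
      ring
    · have h2 : L (k+1) y = L k y + γ k * (y - b k) := hrec k y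
      have hLk : L k y ≤ (Finset.range (k+1)).sup' Finset.nonempty_range_add_one (fun j => L j y) :=
        Finset.le_sup' (fun j => L j y) (Finset.self_mem_range_succ k)
      rw [ih y] at hLk
      have : γ k * (y - b k) ≤ 0 := mul_nonpos_of_nonneg_of_nonpos (hγ k) (by linarith)
      rw [h2, max_eq_left (by linarith), max_eq_right (by linarith)]
      ring


/-- For a family of integrable random variables with constant mean, the expectation
`t ↦ E[ψ(X_t)]` is non-decreasing for every convex `ψ` (whenever these expectations are
defined) if and only if `t ↦ E[(X_t - x)⁺]` is non-decreasing for every `x ∈ ℝ`. -/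
theorem peacock_iff_call_monotone {Ω : Type*} [MeasurableSpace Ω]
    (P : Measure Ω) [IsProbabilityMeasure P]
    (X : ℝ → Ω → ℝ) (m : ℝ)
    (hmeas : ∀ t, 0 ≤ t → Measurable (X t))
    (hint : ∀ t, 0 ≤ t → Integrable (X t) P)
    (hmean : ∀ t, 0 ≤ t → (∫ ω, X t ω ∂P) = m) :
    (∀ ψ : ℝ → ℝ, ConvexOn ℝ Set.univ ψ →
        (∀ t, 0 ≤ t → Integrable (fun ω => ψ (X t ω)) P) →
        (∀ s t, 0 ≤ s → s ≤ t →
          (∫ ω, ψ (X s ω) ∂P) ≤ ∫ ω, ψ (X t ω) ∂P)) ↔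
    (∀ x : ℝ, ∀ s t, 0 ≤ s → s ≤ t →
        (∫ ω, max (X s ω - x) 0 ∂P) ≤ ∫ ω, max (X t ω - x) 0 ∂P) := by
  constructor
  · intro hconv x s t hs hst
    have h1 : ConvexOn ℝ Set.univ (fun y : ℝ => y - x) := by
      refine ⟨convex_univ, fun u _ v _ a b ha hb hab => ?_⟩
      simp only [smul_eq_mul]
      have heq : a * u + b * v - x = a * (u - x) + b * (v - x) := by
        linear_combination x * hab
      exact le_of_eq heq
    have h2 : ConvexOn ℝ Set.univ (fun _ : ℝ => (0:ℝ)) := convexOn_const _ convex_univ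
    have hcx : ConvexOn ℝ Set.univ (fun y : ℝ => max (y - x) 0) := h1.sup h2
    exact hconv _ hcx (fun u hu => ((hint u hu).sub (integrable_const x)).pos_part) s t hs hst
  · intro hcall ψ hψ hψint s t hs hst
    have ht : (0:ℝ) ≤ t := hs.trans hst
    choose c hc using fun x => exists_subgradient' ψ hψ x
    have hcmono : Monotone c := by
      intro u v huv
      rcases eq_or_lt_of_le huv with h | h
      · rw [h]
      · have h1 := hc u v
        have h2 := hc v u
        nlinarith
    -- dyadic grid
    set p : ℕ → ℕ → ℝ := fun n j => (j : ℝ) / 2^n - 2^n with hp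
    have hppos : ∀ n : ℕ, (0:ℝ) < 2^n := fun n => pow_pos two_pos n
    have h4R : ∀ n : ℕ, ((4:ℝ))^n = 2^n * 2^n := fun n => by
      rw [show (4:ℝ) = 2 * 2 by norm_num, mul_pow]
    have hpsucc : ∀ n i, p n i < p n (i+1) := by
      intro n i
      simp only [hp]
      have h2 := hppos n
      rw [sub_lt_sub_iff_right, div_lt_div_iff₀ h2 h2]
      push_cast
      nlinarith
    -- supporting lines
    set Lf : ℕ → ℕ → ℝ → ℝ := fun n j y => ψ (p n j) + c (p n j) * (y - p n j) with hLf
    set γf : ℕ → ℕ → ℝ := fun n i => c (p n (i+1)) - c (p n i) with hγf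
    have hγ : ∀ n i, 0 ≤ γf n i := fun n i => sub_nonneg.mpr (hcmono (hpsucc n i).le)
    set bf : ℕ → ℕ → ℝ := fun n i => if c (p n (i+1)) = c (p n i) then p n i else
      (ψ (p n i) - c (p n i) * p n i - (ψ (p n (i+1)) - c (p n (i+1)) * p n (i+1)))
        / (c (p n (i+1)) - c (p n i)) with hbf
    have hrec : ∀ n i y, Lf n (i+1) y = Lf n i y + γf n i * (y - bf n i) := by
      intro n i y
      simp only [hLf, hγf, hbf]
      by_cases h : c (p n (i+1)) = c (p n i)
      · rw [if_pos h, h]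
        have h1 := hc (p n i) (p n (i+1))
        have h2 := hc (p n (i+1)) (p n i)
        rw [h] at h2
        have : ψ (p n (i+1)) = ψ (p n i) + c (p n i) * (p n (i+1) - p n i) := by linarith
        rw [this]; ring
      · rw [if_neg h]
        have hne : c (p n (i+1)) - c (p n i) ≠ 0 := sub_ne_zero.mpr h
        field_simp
        ring
    have hbrange : ∀ n i, p n i ≤ bf n i ∧ bf n i ≤ p n (i+1) := by
      intro n i
      by_cases h : c (p n (i+1)) = c (p n i)
      · simp only [hbf, if_pos h]
        exact ⟨le_refl _, (hpsucc n i).le⟩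
      · have hγpos : 0 < γf n i := lt_of_le_of_ne (hγ n i) (by
          simp only [hγf]; exact fun hcon => h (by linarith [sub_eq_zero.mp hcon.symm]))
        constructor
        · have h1 := hrec n i (p n i)
          have h2 : Lf n (i+1) (p n i) ≤ ψ (p n i) := hc (p n (i+1)) (p n i)
          have h3 : Lf n i (p n i) = ψ (p n i) := by simp [hLf]
          nlinarith
        · have h1 := hrec n i (p n (i+1))
          have h2 : Lf n i (p n (i+1)) ≤ ψ (p n (i+1)) := hc (p n i) (p n (i+1))
          have h3 : Lf n (i+1) (p n (i+1)) = ψ (p n (i+1)) := by simp [hLf]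
          nlinarith
    have hbmono : ∀ n, Monotone (bf n) := by
      intro n
      apply monotone_nat_of_le_succ
      intro i
      exact le_trans (hbrange n i).2 (hbrange n (i+1)).1
    -- the approximating sequence
    set K : ℕ → ℕ := fun n => 2 * 4^n with hK
    set φ : ℕ → ℝ → ℝ := fun n y =>
      (Finset.range (K n + 1)).sup' Finset.nonempty_range_add_one (fun j => Lf n j y) with hφ
    have hφeq : ∀ n y, φ n y = Lf n 0 y + ∑ i ∈ Finset.range (K n), γf n i * max (y - bf n i) 0 :=
      fun n y => sup_lines_eq' (Lf n) (γf n) (bf n) (hγ n) (hbmono n) (hrec n) (K n) y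
    have hφle : ∀ n y, φ n y ≤ ψ y := by
      intro n y
      apply Finset.sup'_le
      intro j _
      exact hc (p n j) y
    -- monotonicity in n
    have hgrid : ∀ n j, p (n+1) (2*j + 2*4^n) = p n j := by
      intro n j
      have h2 : (0:ℝ) < 2^n := hppos n
      simp only [hp]
      push_cast
      rw [h4R n, pow_succ]
      field_simp
      ring
    have hφmono : ∀ y, Monotone fun n => φ n y := by
      intro y
      apply monotone_nat_of_le_succ
      intro n
      apply Finset.sup'_le
      intro j hj
      have hjle : j ≤ K n := Nat.lt_succ_iff.mp (Finset.mem_range.mp hj)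
      have hpow : (4:ℕ)^(n+1) = 4 * 4^n := pow_succ' 4 n
      have hmem : 2*j + 2*4^n ∈ Finset.range (K (n+1) + 1) := by
        simp only [Finset.mem_range, hK, Nat.lt_succ_iff, hpow]
        simp only [hK] at hjle
        omega
      have heq2 : Lf n j y = Lf (n+1) (2*j + 2*4^n) y := by
        simp only [hLf, hgrid n j]
      rw [heq2]
      exact Finset.le_sup' (fun j => Lf (n+1) j y) hmem
    -- pointwise convergence
    have hφtend : ∀ y, Tendsto (fun n => φ n y) atTop (𝓝 (ψ y)) := by
      intro y
      have hlow : ∀ᶠ n in atTop, ψ y - (c (y+1) - c y) * ((2:ℝ)^n)⁻¹ ≤ φ n y := by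
        have h2n : Tendsto (fun n : ℕ => (2:ℝ)^n) atTop atTop :=
          tendsto_pow_atTop_atTop_of_one_lt one_lt_two
        filter_upwards [h2n.eventually_ge_atTop (|y| + 1)] with n hn
        have h2pos : (0:ℝ) < 2^n := hppos n
        have h1n : (1:ℝ) ≤ 2^n := by nlinarith [abs_nonneg y]
        have hceil1 : y * 2^n ≤ (⌈y * 2^n⌉ : ℝ) := Int.le_ceil _
        have hceil2 : (⌈y * 2^n⌉ : ℝ) < y * 2^n + 1 := Int.ceil_lt_add_one _
        have hy1 : y ≤ |y| := le_abs_self y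
        have hy2 : -y ≤ |y| := neg_le_abs y
        have hm1 : (|y| + 1) * 2^n ≤ 2^n * 2^n := mul_le_mul_of_nonneg_right hn h2pos.le
        have hm2 : (-y) * 2^n ≤ |y| * 2^n := mul_le_mul_of_nonneg_right hy2 h2pos.le
        have hm3 : y * 2^n ≤ |y| * 2^n := mul_le_mul_of_nonneg_right hy1 h2pos.le
        have hZl : (-(2^n * 2^n) : ℝ) ≤ (⌈y * 2^n⌉:ℝ) := by nlinarith
        have hZu : (⌈y * 2^n⌉:ℝ) ≤ 2^n * 2^n := by nlinarith
        have hjz0 : (0:ℤ) ≤ ⌈y * 2^n⌉ + 4^n := by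
          have hcast : (-(4^n:ℤ) : ℝ) ≤ (⌈y * 2^n⌉:ℝ) := by
            push_cast
            rw [h4R n]
            linarith
          have : -(4^n:ℤ) ≤ ⌈y * 2^n⌉ := by exact_mod_cast hcast
          linarith
        have hjzK : ⌈y * 2^n⌉ + 4^n ≤ 2 * 4^n := by
          have hcast : ((⌈y * 2^n⌉:ℤ) : ℝ) ≤ ((4^n:ℤ):ℝ) := by
            push_cast
            rw [h4R n]
            linarith
          have : ⌈y * 2^n⌉ ≤ (4^n:ℤ) := by exact_mod_cast hcast
          linarith
        set j : ℕ := (⌈y * 2^n⌉ + 4^n).toNat with hj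
        have hjint : ((j:ℕ) : ℤ) = ⌈y * 2^n⌉ + 4^n := Int.toNat_of_nonneg hjz0
        have hjcast : (j : ℝ) = (⌈y * 2^n⌉:ℝ) + (4:ℝ)^n := by
          have h := congrArg (fun z : ℤ => (z:ℝ)) hjint
          push_cast at h
          exact h
        have hjmem : j ∈ Finset.range (K n + 1) := by
          simp only [Finset.mem_range, hK, Nat.lt_succ_iff]
          rw [hj]
          apply Int.toNat_le.mpr
          push_cast
          linarith
        obtain ⟨x, hxdef⟩ : ∃ x, x = p n j := ⟨_, rfl⟩
        have hxval : x = (⌈y * 2^n⌉ : ℝ) / 2^n := by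
          rw [hxdef]
          simp only [hp]
          rw [hjcast, h4R n]
          field_simp
          ring
        have hxy : y ≤ x := by
          rw [hxval, le_div_iff₀ h2pos]
          linarith
        have hxy2 : x ≤ y + ((2:ℝ)^n)⁻¹ := by
          rw [hxval, div_le_iff₀ h2pos]
          have hexp : (y + ((2:ℝ)^n)⁻¹) * 2^n = y * 2^n + 1 := by field_simp
          rw [hexp]
          linarith
        have hcy : c y ≤ c x := hcmono hxy
        have hinv1 : ((2:ℝ)^n)⁻¹ ≤ 1 := inv_le_one_of_one_le₀ h1n
        have hcy2 : c x ≤ c (y + 1) := hcmono (by linarith)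
        have hL : ψ y + c y * (x - y) ≤ ψ x := hc y x
        have hφge : Lf n j y ≤ φ n y := Finset.le_sup' (fun j' => Lf n j' y) hjmem
        have hLval : Lf n j y = ψ x + c x * (y - x) := by simp [hLf, hxdef]
        have hinv : (0:ℝ) < ((2:ℝ)^n)⁻¹ := inv_pos.mpr h2pos
        have hprod : (c x - c y) * (x - y) ≤ (c (y+1) - c y) * ((2:ℝ)^n)⁻¹ :=
          mul_le_mul (by linarith) (by linarith) (by linarith) (by linarith)
        nlinarith [hprod, hL, hφge, hLval]
      have hlim : Tendsto (fun n : ℕ => ψ y - (c (y+1) - c y) * ((2:ℝ)^n)⁻¹) atTop (𝓝 (ψ y)) := by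
        have h0 : Tendsto (fun n : ℕ => ((2:ℝ)^n)⁻¹) atTop (𝓝 0) :=
          (tendsto_pow_atTop_atTop_of_one_lt one_lt_two).inv_tendsto_atTop
        have h1 : Tendsto (fun n : ℕ => (c (y+1) - c y) * ((2:ℝ)^n)⁻¹) atTop (𝓝 0) := by
          have h1' := h0.const_mul (c (y+1) - c y)
          rw [mul_zero] at h1'
          exact h1'
        have h2 : Tendsto (fun n : ℕ => ψ y - (c (y+1) - c y) * ((2:ℝ)^n)⁻¹) atTop
            (𝓝 (ψ y - 0)) := (tendsto_const_nhds (x := ψ y)).sub h1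
        rw [sub_zero] at h2
        exact h2
      exact tendsto_of_tendsto_of_tendsto_of_le_of_le' hlim tendsto_const_nhds hlow
        (Eventually.of_forall fun n => hφle n y)
    -- integrability and integral formula
    have hcint : ∀ u, 0 ≤ u → ∀ x : ℝ, Integrable (fun ω => max (X u ω - x) 0) P :=
      fun u hu x => ((hint u hu).sub (integrable_const x)).pos_part
    have hL0int : ∀ u, 0 ≤ u → ∀ n, Integrable (fun ω => Lf n 0 (X u ω)) P := by
      intro u hu n
      have hr : (fun ω => Lf n 0 (X u ω))
          = fun ω => ψ (p n 0) + c (p n 0) * (X u ω - p n 0) := by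
        funext ω; simp [hLf]
      rw [hr]
      exact (integrable_const _).add (((hint u hu).sub (integrable_const _)).const_mul _)
    have hsumint : ∀ u, 0 ≤ u → ∀ n, Integrable
        (fun ω => ∑ i ∈ Finset.range (K n), γf n i * max (X u ω - bf n i) 0) P :=
      fun u hu n => integrable_finset_sum _ fun i _ => (hcint u hu (bf n i)).const_mul _
    have hφint : ∀ u, 0 ≤ u → ∀ n, Integrable (fun ω => φ n (X u ω)) P := by
      intro u hu n
      have hr : (fun ω => φ n (X u ω)) = fun ω => Lf n 0 (X u ω)
          + ∑ i ∈ Finset.range (K n), γf n i * max (X u ω - bf n i) 0 := by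
        funext ω; exact hφeq n (X u ω)
      rw [hr]
      exact (hL0int u hu n).add (hsumint u hu n)
    have hkey : ∀ u, 0 ≤ u → ∀ n, (∫ ω, φ n (X u ω) ∂P)
        = (ψ (p n 0) + c (p n 0) * (m - p n 0))
          + ∑ i ∈ Finset.range (K n), γf n i * ∫ ω, max (X u ω - bf n i) 0 ∂P := by
      intro u hu n
      have heq : (fun ω => φ n (X u ω)) = fun ω => Lf n 0 (X u ω)
          + ∑ i ∈ Finset.range (K n), γf n i * max (X u ω - bf n i) 0 := by
        funext ω; exact hφeq n (X u ω)
      rw [heq, integral_add (hL0int u hu n) (hsumint u hu n), integral_finset_sum _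
        (fun i _ => (hcint u hu (bf n i)).const_mul _)]
      congr 1
      · have hrepr : (fun ω => Lf n 0 (X u ω))
            = fun ω => ψ (p n 0) + c (p n 0) * (X u ω - p n 0) := by
          funext ω; simp [hLf]
        have hI2 : Integrable (fun ω => c (p n 0) * (X u ω - p n 0)) P :=
          ((hint u hu).sub (integrable_const _)).const_mul _
        rw [hrepr, integral_add (integrable_const _) hI2, integral_const,
          integral_const_mul, integral_sub (hint u hu) (integrable_const _), integral_const,
          hmean u hu]
        simp
      · exact Finset.sum_congr rfl fun i _ => integral_const_mul _ _
    -- conclude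
    have htendS : Tendsto (fun n => ∫ ω, φ n (X s ω) ∂P) atTop (𝓝 (∫ ω, ψ (X s ω) ∂P)) :=
      integral_tendsto_of_tendsto_of_monotone (hφint s hs) (hψint s hs)
        (Eventually.of_forall fun ω => fun a b hab => hφmono (X s ω) hab)
        (Eventually.of_forall fun ω => hφtend (X s ω))
    have htendT : Tendsto (fun n => ∫ ω, φ n (X t ω) ∂P) atTop (𝓝 (∫ ω, ψ (X t ω) ∂P)) :=
      integral_tendsto_of_tendsto_of_monotone (hφint t ht) (hψint t ht)
        (Eventually.of_forall fun ω => fun a b hab => hφmono (X t ω) hab)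
        (Eventually.of_forall fun ω => hφtend (X t ω))
    refine le_of_tendsto_of_tendsto' htendS htendT fun n => ?_
    rw [hkey s hs n, hkey t ht n]
    apply add_le_add_right
    apply Finset.sum_le_sum
    intro i _
    exact mul_le_mul_of_nonneg_left (hcall (bf n i) s t hs hst) (hγ n i)
end

section
/- Let I, J be intervals of ℝ (or subsets of ℤ) and p : I × J → ℝ≥0. Then p is totally positive of order 2 (i.e., p(x₁,y₁)p(x₂,y₂) ≥ p(x₁,y₂)p(x₂,y₁) for all x₁ ≤ x₂ in I, y₁ ≤ y₂ in J) if and only if the set D = {(x,y) : p(x,y) > 0} is a sublattice of I × J and p is TP₂ on D. -/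
/-- A nonnegative kernel `p` on `I × J` is totally positive of order 2 if and only if
its positivity set `D = {(x,y) : p x y > 0}` is a sublattice of `I × J` and `p` is
TP₂ on `D`. -/
theorem tp2_iff_sublattice_and_tp2_on_pos (I J : Set ℝ) (p : ℝ → ℝ → ℝ)
    (hnonneg : ∀ x ∈ I, ∀ y ∈ J, 0 ≤ p x y) :
    (∀ x₁ ∈ I, ∀ x₂ ∈ I, ∀ y₁ ∈ J, ∀ y₂ ∈ J, x₁ ≤ x₂ → y₁ ≤ y₂ →
        p x₁ y₂ * p x₂ y₁ ≤ p x₁ y₁ * p x₂ y₂) ↔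
    ((∀ x₁ ∈ I, ∀ x₂ ∈ I, ∀ y₁ ∈ J, ∀ y₂ ∈ J, x₁ < x₂ → y₁ < y₂ →
        0 < p x₁ y₂ → 0 < p x₂ y₁ → 0 < p x₁ y₁ ∧ 0 < p x₂ y₂) ∧
      (∀ x₁ ∈ I, ∀ x₂ ∈ I, ∀ y₁ ∈ J, ∀ y₂ ∈ J, x₁ ≤ x₂ → y₁ ≤ y₂ →
        0 < p x₁ y₁ → 0 < p x₁ y₂ → 0 < p x₂ y₁ → 0 < p x₂ y₂ →
        p x₁ y₂ * p x₂ y₁ ≤ p x₁ y₁ * p x₂ y₂)) := by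
  constructor
  · intro h
    constructor
    · intro x₁ hx₁ x₂ hx₂ y₁ hy₁ y₂ hy₂ hx hy h12 h21
      have key := h x₁ hx₁ x₂ hx₂ y₁ hy₁ y₂ hy₂ hx.le hy.le
      have hpos : 0 < p x₁ y₁ * p x₂ y₂ := lt_of_lt_of_le (mul_pos h12 h21) key
      have h11 : 0 ≤ p x₁ y₁ := hnonneg x₁ hx₁ y₁ hy₁
      have h22 : 0 ≤ p x₂ y₂ := hnonneg x₂ hx₂ y₂ hy₂
      constructor
      · rcases h11.lt_or_eq with h | h
        · exact h
        · exfalso; rw [← h] at hpos; simp at hpos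
      · rcases h22.lt_or_eq with h | h
        · exact h
        · exfalso; rw [← h] at hpos; simp at hpos
    · intro x₁ hx₁ x₂ hx₂ y₁ hy₁ y₂ hy₂ hx hy _ _ _ _
      exact h x₁ hx₁ x₂ hx₂ y₁ hy₁ y₂ hy₂ hx hy
  · rintro ⟨hlat, htp⟩ x₁ hx₁ x₂ hx₂ y₁ hy₁ y₂ hy₂ hx hy
    rcases (hnonneg x₁ hx₁ y₂ hy₂).lt_or_eq with h12 | h12
    · rcases (hnonneg x₂ hx₂ y₁ hy₁).lt_or_eq with h21 | h21
      · rcases hx.lt_or_eq with hx' | hx'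
        · rcases hy.lt_or_eq with hy' | hy'
          · obtain ⟨h11, h22⟩ := hlat x₁ hx₁ x₂ hx₂ y₁ hy₁ y₂ hy₂ hx' hy' h12 h21
            exact htp x₁ hx₁ x₂ hx₂ y₁ hy₁ y₂ hy₂ hx hy h11 h12 h21 h22
          · subst hy'; rw [mul_comm]
        · subst hx'; rw [mul_comm]
      · rw [← h21, mul_zero]
        exact mul_nonneg (hnonneg x₁ hx₁ y₁ hy₁) (hnonneg x₂ hx₂ y₂ hy₂)
    · rw [← h12, zero_mul]
      exact mul_nonneg (hnonneg x₁ hx₁ y₁ hy₁) (hnonneg x₂ hx₂ y₂ hy₂)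
end

section
/- Let I, J, K be intervals of ℝ (or subsets of ℤ), σ a positive measure on J, and p : I × J → ℝ≥0, q : J × K → ℝ≥0 two TP₂ functions such that r(x,z) = ∫_J p(x,y) q(y,z) σ(dy) is finite for all (x,z) ∈ I × K. Then r is TP₂ on I × K. -/
open MeasureTheory Set

lemma setIntegral_nonneg_of_forall_mem {μ : Measure ℝ} {s : Set ℝ} {f : ℝ → ℝ}
    (hf : AEStronglyMeasurable f (μ.restrict s)) (h : ∀ x ∈ s, 0 ≤ f x) :
    0 ≤ ∫ x in s, f x ∂μ := by
  refine setIntegral_nonneg_of_ae_restrict ?_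
  obtain ⟨g, hgm, hfg⟩ := hf
  have hN : μ.restrict s {x | f x ≠ g x} = 0 := hfg
  set N := toMeasurable (μ.restrict s) {x | f x ≠ g x} with hNdef
  have hNzero : μ.restrict s N = 0 := by
    rw [measure_toMeasurable]; exact hN
  have hGm : MeasurableSet {x | g x < 0} := by
    exact (hgm.measurable (measurableSet_Iio (a := (0:ℝ))))
  have hbad : μ.restrict s ({x | g x < 0} \ N) = 0 := by
    rw [Measure.restrict_apply (hGm.diff (measurableSet_toMeasurable _ _))]
    convert measure_empty (μ := μ)
    ext x
    simp only [mem_inter_iff, mem_diff, mem_setOf_eq, mem_empty_iff_false, iff_false, not_and]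
    rintro ⟨hgx, hxN⟩ hxs
    have hfx : f x = g x := by
      by_contra hne
      exact hxN (subset_toMeasurable _ _ hne)
    exact absurd (h x hxs) (by rw [hfx]; exact not_le.2 hgx)
  have : ∀ᵐ x ∂μ.restrict s, 0 ≤ f x := by
    rw [ae_iff]
    refine measure_mono_null ?_ (measure_union_null hNzero hbad)
    intro x hx
    simp only [mem_setOf_eq, not_le] at hx
    by_cases hxN : x ∈ N
    · exact Or.inl hxN
    · refine Or.inr ⟨?_, hxN⟩
      have hfx : f x = g x := by
        by_contra hne
        exact hxN (subset_toMeasurable _ _ hne)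
      simpa [mem_setOf_eq, ← hfx]
  exact this


/-- Basic composition formula: the product `r(x,z) = ∫_J p(x,y) q(y,z) σ(dy)` of two
TP₂ kernels is TP₂. -/
theorem tp2_composition (I J K : Set ℝ) (σ : Measure ℝ)
    (p q : ℝ → ℝ → ℝ)
    (hp_nonneg : ∀ x ∈ I, ∀ y ∈ J, 0 ≤ p x y)
    (hq_nonneg : ∀ y ∈ J, ∀ z ∈ K, 0 ≤ q y z)
    (hp : ∀ x₁ ∈ I, ∀ x₂ ∈ I, ∀ y₁ ∈ J, ∀ y₂ ∈ J, x₁ ≤ x₂ → y₁ ≤ y₂ →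
        p x₁ y₂ * p x₂ y₁ ≤ p x₁ y₁ * p x₂ y₂)
    (hq : ∀ y₁ ∈ J, ∀ y₂ ∈ J, ∀ z₁ ∈ K, ∀ z₂ ∈ K, y₁ ≤ y₂ → z₁ ≤ z₂ →
        q y₁ z₂ * q y₂ z₁ ≤ q y₁ z₁ * q y₂ z₂)
    (hint : ∀ x ∈ I, ∀ z ∈ K, IntegrableOn (fun y => p x y * q y z) J σ)
    (r : ℝ → ℝ → ℝ)
    (hr : ∀ x ∈ I, ∀ z ∈ K, r x z = ∫ y in J, p x y * q y z ∂σ) :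
    ∀ x₁ ∈ I, ∀ x₂ ∈ I, ∀ z₁ ∈ K, ∀ z₂ ∈ K, x₁ ≤ x₂ → z₁ ≤ z₂ →
      r x₁ z₂ * r x₂ z₁ ≤ r x₁ z₁ * r x₂ z₂ := by
  intro x₁ hx₁ x₂ hx₂ z₁ hz₁ z₂ hz₂ hx hz
  -- the four kernels
  set f11 : ℝ → ℝ := fun y => p x₁ y * q y z₁ with hf11
  set f12 : ℝ → ℝ := fun y => p x₁ y * q y z₂ with hf12
  set f21 : ℝ → ℝ := fun y => p x₂ y * q y z₁ with hf21
  set f22 : ℝ → ℝ := fun y => p x₂ y * q y z₂ with hf22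
  have h11 : IntegrableOn f11 J σ := hint x₁ hx₁ z₁ hz₁
  have h12 : IntegrableOn f12 J σ := hint x₁ hx₁ z₂ hz₂
  have h21 : IntegrableOn f21 J σ := hint x₂ hx₂ z₁ hz₁
  have h22 : IntegrableOn f22 J σ := hint x₂ hx₂ z₂ hz₂
  -- symmetrized pointwise determinant inequality
  have key0 : ∀ y ∈ J, ∀ y' ∈ J, y ≤ y' →
      f12 y * f21 y' + f21 y * f12 y' ≤ f11 y * f22 y' + f22 y * f11 y' := by
    intro y hy y' hy' hyy'
    have hP := hp x₁ hx₁ x₂ hx₂ y hy y' hy' hx hyy'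
    have hQ := hq y hy y' hy' z₁ hz₁ z₂ hz₂ hyy' hz
    have := mul_nonneg (sub_nonneg.2 hP) (sub_nonneg.2 hQ)
    simp only [hf11, hf12, hf21, hf22]
    nlinarith [this]
  have key : ∀ y ∈ J, ∀ y' ∈ J,
      f12 y * f21 y' + f21 y * f12 y' ≤ f11 y * f22 y' + f22 y * f11 y' := by
    intro y hy y' hy'
    rcases le_total y y' with h | h
    · exact key0 y hy y' hy' h
    · have := key0 y' hy' y hy h
      linarith
  set A := ∫ y in J, f11 y ∂σ with hA
  set B := ∫ y in J, f12 y ∂σ with hB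
  set C := ∫ y in J, f21 y ∂σ with hC
  set D := ∫ y in J, f22 y ∂σ with hD
  -- inner integral
  have inner : ∀ y', (∫ y in J,
      (f11 y * f22 y' + f22 y * f11 y' - f12 y * f21 y' - f21 y * f12 y') ∂σ)
      = A * f22 y' + D * f11 y' - B * f21 y' - C * f12 y' := by
    intro y'
    have i1 : Integrable (fun y => f11 y * f22 y') (σ.restrict J) := h11.mul_const _
    have i2 : Integrable (fun y => f22 y * f11 y') (σ.restrict J) := h22.mul_const _
    have i3 : Integrable (fun y => f12 y * f21 y') (σ.restrict J) := h12.mul_const _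
    have i4 : Integrable (fun y => f21 y * f12 y') (σ.restrict J) := h21.mul_const _
    have i12 : Integrable (fun y => f11 y * f22 y' + f22 y * f11 y') (σ.restrict J) := i1.add i2
    have i123 : Integrable (fun y => f11 y * f22 y' + f22 y * f11 y' - f12 y * f21 y')
        (σ.restrict J) := i12.sub i3
    rw [integral_sub i123 i4, integral_sub i12 i3, integral_add i1 i2,
      integral_mul_const, integral_mul_const, integral_mul_const, integral_mul_const]
  -- the outer integrand
  set g : ℝ → ℝ := fun y' => A * f22 y' + D * f11 y' - B * f21 y' - C * f12 y' with hg
  have hg_int : IntegrableOn g J σ :=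
    (((h22.const_mul A).add (h11.const_mul D)).sub (h21.const_mul B)).sub (h12.const_mul C)
  have hg_nonneg : ∀ y' ∈ J, 0 ≤ g y' := by
    intro y' hy'
    rw [hg]
    simp only
    rw [← inner y']
    refine setIntegral_nonneg_of_forall_mem ?_ ?_
    · exact ((((h11.mul_const _).add (h22.mul_const _)).sub (h12.mul_const _)).sub
        (h21.mul_const _)).aestronglyMeasurable
    · intro y hy
      have := key y hy y' hy'
      linarith
  have outer : (∫ y' in J, g y' ∂σ) = A * D + D * A - B * C - C * B := by
    rw [hg]
    simp only
    have j1 : Integrable (fun y' => A * f22 y') (σ.restrict J) := h22.const_mul _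
    have j2 : Integrable (fun y' => D * f11 y') (σ.restrict J) := h11.const_mul _
    have j3 : Integrable (fun y' => B * f21 y') (σ.restrict J) := h21.const_mul _
    have j4 : Integrable (fun y' => C * f12 y') (σ.restrict J) := h12.const_mul _
    have j12 : Integrable (fun y' => A * f22 y' + D * f11 y') (σ.restrict J) := j1.add j2
    have j123 : Integrable (fun y' => A * f22 y' + D * f11 y' - B * f21 y')
        (σ.restrict J) := j12.sub j3
    rw [integral_sub j123 j4, integral_sub j12 j3, integral_add j1 j2,
      integral_const_mul, integral_const_mul, integral_const_mul, integral_const_mul]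
  have final : 0 ≤ A * D + D * A - B * C - C * B := by
    rw [← outer]
    exact setIntegral_nonneg_of_forall_mem hg_int.aestronglyMeasurable hg_nonneg
  rw [hr x₁ hx₁ z₁ hz₁, hr x₁ hx₁ z₂ hz₂, hr x₂ hx₂ z₁ hz₁, hr x₂ hx₂ z₂ hz₂]
  have e1 : (∫ y in J, p x₁ y * q y z₁ ∂σ) = A := rfl
  have e2 : (∫ y in J, p x₁ y * q y z₂ ∂σ) = B := rfl
  have e3 : (∫ y in J, p x₂ y * q y z₁ ∂σ) = C := rfl
  have e4 : (∫ y in J, p x₂ y * q y z₂ ∂σ) = D := rfl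
  rw [e1, e2, e3, e4]
  linarith
end

section
/- If p, q : ℝ → ℝ≥0 are integrable log-concave functions, then their convolution r = p ∗ q, r(x) = ∫ p(x-y) q(y) dy, is log-concave. -/
open MeasureTheory Set
open scoped Pointwise ENNReal

/-- A nonneg integrable log-concave function is bounded. -/
lemma logconcave_bounded (p : ℝ → ℝ) (hnn : ∀ x, 0 ≤ p x) (hint : Integrable p)
    (hlc : ∀ a b : ℝ, ∀ l : ℝ, 0 ≤ l → l ≤ 1 →
      (p a) ^ l * (p b) ^ (1 - l) ≤ p (l * a + (1 - l) * b)) :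
    ∃ M : ℝ, 0 ≤ M ∧ ∀ x, p x ≤ M := by
  by_cases h2 : ∃ y w : ℝ, y < w ∧ 0 < p y ∧ 0 < p w
  · obtain ⟨y, w, hyw, hpy, hpw⟩ := h2
    set m : ℝ := min (p y) (p w) with hm_def
    have hm : 0 < m := lt_min hpy hpw
    set c : ℝ := min 1 m with hc_def
    have hc : 0 < c := lt_min one_pos hm
    have hc1 : c ≤ 1 := min_le_left _ _
    set d : ℝ := w - y with hd_def
    have hd : 0 < d := by simp [hd_def]; linarith
    set R : ℝ := 8 * (∫ x, p x) / (c * d) with hR_def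
    have hR0 : 0 ≤ R := by
      have : 0 ≤ ∫ x, p x := integral_nonneg hnn
      positivity
    refine ⟨R ^ 2 + 1, by positivity, fun x => ?_⟩
    by_contra hx
    push_neg at hx
    have hx1 : (1:ℝ) ≤ p x := by nlinarith
    have hx0 : (0:ℝ) < p x := by linarith
    -- pick a far point u
    obtain ⟨u, hpu, hdu⟩ : ∃ u : ℝ, m ≤ p u ∧ d / 2 ≤ |x - u| := by
      rcases le_or_gt (d / 2) |x - y| with h | h
      · exact ⟨y, min_le_left _ _, h⟩
      · refine ⟨w, min_le_right _ _, ?_⟩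
        have h3 : |y - w| ≤ |y - x| + |x - w| := abs_sub_le _ _ _
        have h4 : |y - w| = d := by rw [abs_of_nonpos (by linarith)]; simp [hd_def]
        have h5 : |y - x| = |x - y| := abs_sub_comm _ _
        linarith
    have hpu0 : 0 < p u := lt_of_lt_of_le hm hpu
    have hxu : x - u ≠ 0 := by
      intro hzero
      rw [hzero] at hdu; simp at hdu; linarith
    -- pointwise lower bound on the interval between (x+u)/2 and x
    set K : ℝ := c * p x ^ (2⁻¹ : ℝ) with hK_def
    have hK0 : 0 ≤ K := by positivity
    have key : ∀ z ∈ uIcc ((x + u)/2) x, K ≤ p z := by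
      intro z hz
      set t : ℝ := (z - u) / (x - u) with ht_def
      have ht : 2⁻¹ ≤ t ∧ t ≤ 1 := by
        rcases lt_or_gt_of_ne hxu with hneg | hpos
        · -- x < u
          have hxltu : x < u := by linarith
          have : uIcc ((x + u)/2) x = Icc x ((x + u)/2) := by
            rw [uIcc_comm]; exact uIcc_of_le (by linarith)
          rw [this] at hz
          obtain ⟨hz1, hz2⟩ := hz
          constructor
          · rw [ht_def, le_div_iff_of_neg hneg]; linarith
          · rw [ht_def, div_le_iff_of_neg hneg]; linarith
        · -- u < x
          have hultx : u < x := by linarith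
          have : uIcc ((x + u)/2) x = Icc ((x + u)/2) x := uIcc_of_le (by linarith)
          rw [this] at hz
          obtain ⟨hz1, hz2⟩ := hz
          constructor
          · rw [ht_def, le_div_iff₀ hpos]; linarith
          · rw [ht_def, div_le_one hpos]; linarith
      have hz_eq : z = t * x + (1 - t) * u := by
        have h' : t * (x - u) = z - u := by rw [ht_def]; exact div_mul_cancel₀ _ hxu
        linear_combination -h'
      have hmain := hlc x u t (by linarith [ht.1]) ht.2
      rw [← hz_eq] at hmain
      have h1 : p x ^ (2⁻¹ : ℝ) ≤ p x ^ t :=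
        Real.rpow_le_rpow_of_exponent_le hx1 ht.1
      have h2 : c ≤ p u ^ (1 - t) := by
        rcases le_or_gt 1 (p u) with hpu1 | hpu1
        · calc c ≤ 1 := hc1
            _ ≤ p u ^ (1 - t) := Real.one_le_rpow hpu1 (by linarith [ht.2])
        · calc c ≤ m := min_le_right _ _
            _ ≤ p u := hpu
            _ = p u ^ (1:ℝ) := (Real.rpow_one _).symm
            _ ≤ p u ^ (1 - t) :=
              Real.rpow_le_rpow_of_exponent_ge hpu0 hpu1.le (by linarith [ht.1])
      calc K = c * p x ^ (2⁻¹ : ℝ) := rfl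
        _ ≤ p u ^ (1 - t) * p x ^ t := by
            apply mul_le_mul h2 h1 (by positivity) (by positivity)
        _ = p x ^ t * p u ^ (1 - t) := mul_comm _ _
        _ ≤ p z := hmain
    -- integrate the bound
    set I : Set ℝ := uIcc ((x + u)/2) x with hI_def
    have hIm : MeasurableSet I := measurableSet_uIcc
    have hIvol : volume I = ENNReal.ofReal (|x - u| / 2) := by
      rw [hI_def, Real.volume_interval]
      congr 1
      rw [show x - (x + u)/2 = (x - u)/2 by ring, abs_div]
      simp
    have hIint : Integrable (I.indicator fun _ => K) := by
      rw [integrable_indicator_iff hIm]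
      refine integrableOn_const ?_
      rw [hIvol]; exact ENNReal.ofReal_ne_top
    have hle : ∀ z, (I.indicator fun _ => K) z ≤ p z := by
      intro z
      by_cases hz : z ∈ I
      · rw [indicator_of_mem hz]; exact key z hz
      · rw [indicator_of_notMem hz]; exact hnn z
    have hint2 : K * (|x - u| / 2) ≤ ∫ z, p z := by
      have := integral_mono hIint hint hle
      rwa [integral_indicator_const _ hIm, measureReal_def, hIvol, smul_eq_mul,
        ENNReal.toReal_ofReal (by positivity), mul_comm] at this
    -- conclude
    have hsqrt : p x ^ (2⁻¹ : ℝ) ≤ R := by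
      have h6 : c * p x ^ (2⁻¹ : ℝ) * (d / 4) ≤ ∫ z, p z := by
        calc c * p x ^ (2⁻¹ : ℝ) * (d / 4) ≤ K * (|x - u| / 2) := by
              rw [hK_def]
              apply mul_le_mul_of_nonneg_left _ hK0
              linarith
          _ ≤ ∫ z, p z := hint2
      rw [hR_def, le_div_iff₀ (by positivity)]
      nlinarith [Real.rpow_nonneg hx0.le (2⁻¹ : ℝ)]
    have hsq : (p x ^ (2⁻¹ : ℝ)) ^ 2 = p x := by
      rw [← Real.rpow_natCast (p x ^ (2⁻¹ : ℝ)) 2, ← Real.rpow_mul hx0.le]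
      norm_num
    nlinarith [pow_le_pow_left₀ (Real.rpow_nonneg hx0.le (2⁻¹ : ℝ)) hsqrt 2]
  · push_neg at h2
    by_cases h3 : ∃ y, 0 < p y
    · obtain ⟨y, hpy⟩ := h3
      refine ⟨p y, hpy.le, fun x => ?_⟩
      rcases lt_trichotomy x y with hlt | heq | hgt
      · by_cases hpx : 0 < p x
        · linarith [h2 x y hlt hpx]
        · push_neg at hpx; linarith
      · rw [heq]
      · by_cases hpx : 0 < p x
        · linarith [h2 y x hgt hpy]
        · push_neg at hpx; linarith
    · push_neg at h3
      exact ⟨1, zero_le_one, fun x => le_trans (h3 x) zero_le_one⟩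

/-- 1-D Brunn-Minkowski for compact sets. -/
lemma compact_add_volume {K L : Set ℝ} (hK : IsCompact K) (hKn : K.Nonempty)
    (hL : IsCompact L) (hLn : L.Nonempty) :
    volume K + volume L ≤ volume (K + L) := by
  set a := sSup K with ha_def
  set b := sInf L with hb_def
  have haK : a ∈ K := hK.sSup_mem hKn
  have hbL : b ∈ L := hL.sInf_mem hLn
  set X : Set ℝ := b +ᵥ K with hX_def
  set Y : Set ℝ := a +ᵥ L with hY_def
  have hXsub : X ⊆ K + L := by
    rintro x hx
    rw [Set.mem_vadd_set] at hx
    obtain ⟨k, hk, rfl⟩ := hx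
    have : b +ᵥ k = k + b := by simp [vadd_eq_add, add_comm]
    rw [this]
    exact add_mem_add hk hbL
  have hYsub : Y ⊆ K + L := by
    rintro x hx
    rw [Set.mem_vadd_set] at hx
    obtain ⟨m, hm, rfl⟩ := hx
    have : a +ᵥ m = a + m := rfl
    rw [this]
    exact add_mem_add haK hm
  have hXm : MeasurableSet X := by
    have : IsCompact X := by
      rw [hX_def, ← Set.image_vadd]
      exact hK.image (continuous_const.add continuous_id)
    exact this.isClosed.measurableSet
  have hinter : X ∩ Y ⊆ {a + b} := by
    rintro x ⟨hx1, hx2⟩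
    rw [Set.mem_vadd_set] at hx1 hx2
    obtain ⟨k, hk, hk'⟩ := hx1
    obtain ⟨m, hm, hm'⟩ := hx2
    have h1 : k ≤ a := le_csSup hK.bddAbove hk
    have h2 : b ≤ m := csInf_le hL.bddBelow hm
    have hk'' : b + k = x := hk'
    have hm'' : a + m = x := hm'
    have : x = a + b := le_antisymm (by linarith) (by linarith)
    simp [this]
  have hinter0 : volume (X ∩ Y) = 0 :=
    measure_mono_null hinter (measure_singleton _)
  have hXvol : volume X = volume K := measure_vadd _ _ _
  have hYvol : volume Y = volume L := measure_vadd _ _ _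
  have hunion := measure_union_add_inter' (μ := (volume : Measure ℝ)) (s := X) hXm Y
  calc volume K + volume L = volume X + volume Y := by rw [hXvol, hYvol]
    _ = volume (X ∪ Y) + volume (X ∩ Y) := hunion.symm
    _ = volume (X ∪ Y) := by rw [hinter0, add_zero]
    _ ≤ volume (K + L) := measure_mono (union_subset hXsub hYsub)

lemma volume_smul_set {r : ℝ} (hr : 0 ≤ r) (s : Set ℝ) :
    volume (r • s) = ENNReal.ofReal r * volume s := by
  rw [Measure.addHaar_smul volume r s]
  simp [abs_of_nonneg hr]

/-- Superadditivity of volume for convex combinations of arbitrary sets. -/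
lemma superadd_volume {l : ℝ} (hl0 : 0 < l) (hl1 : l < 1) (A B S : Set ℝ)
    (hA : A.Nonempty) (hB : B.Nonempty)
    (hS : ∀ a ∈ A, ∀ b ∈ B, l * a + (1 - l) * b ∈ S)
    (A' B' : Set ℝ) (hA'A : A' ⊆ A) (hB'B : B' ⊆ B) (hA'm : MeasurableSet A')
    (hB'm : MeasurableSet B') (hA'f : volume A' ≠ ⊤) (hB'f : volume B' ≠ ⊤) :
    ENNReal.ofReal l * volume A' + ENNReal.ofReal (1 - l) * volume B' ≤ volume S := by
  refine ENNReal.le_of_forall_pos_le_add fun ε hε hStop => ?_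
  have hε2 : ((ε : ℝ≥0∞) / 2) ≠ 0 := by
    simp [ENNReal.div_eq_zero_iff]
    exact_mod_cast hε.ne'
  obtain ⟨K, hKA', hKc, hKv⟩ := hA'm.exists_isCompact_lt_add hA'f hε2
  obtain ⟨L, hLB', hLc, hLv⟩ := hB'm.exists_isCompact_lt_add hB'f hε2
  set K₀ : Set ℝ := K ∪ {hA.some} with hK0_def
  set L₀ : Set ℝ := L ∪ {hB.some} with hL0_def
  have hK₀c : IsCompact K₀ := hKc.union isCompact_singleton
  have hL₀c : IsCompact L₀ := hLc.union isCompact_singleton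
  have hK₀n : K₀.Nonempty := ⟨hA.some, Or.inr rfl⟩
  have hL₀n : L₀.Nonempty := ⟨hB.some, Or.inr rfl⟩
  have hK₀A : K₀ ⊆ A := union_subset (hKA'.trans hA'A) (by simp [hA.some_mem])
  have hL₀B : L₀ ⊆ B := union_subset (hLB'.trans hB'B) (by simp [hB.some_mem])
  have hsub : l • K₀ + (1 - l) • L₀ ⊆ S := by
    rintro x hx
    rw [Set.mem_add] at hx
    obtain ⟨u, hu, v, hv, rfl⟩ := hx
    obtain ⟨k, hk, rfl⟩ := hu
    obtain ⟨m, hm, rfl⟩ := hv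
    simpa [smul_eq_mul] using hS k (hK₀A hk) m (hL₀B hm)
  have hcomp := compact_add_volume (hK₀c.smul l) (hK₀n.smul_set)
    (hL₀c.smul (1 - l)) (hL₀n.smul_set)
  have hvolK : volume (l • K₀) = ENNReal.ofReal l * volume K₀ :=
    volume_smul_set hl0.le _
  have hvolL : volume ((1 - l) • L₀) = ENNReal.ofReal (1 - l) * volume L₀ :=
    volume_smul_set (by linarith) _
  have hmainineq : ENNReal.ofReal l * volume K₀ + ENNReal.ofReal (1 - l) * volume L₀
      ≤ volume S := by
    rw [← hvolK, ← hvolL]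
    exact hcomp.trans (measure_mono hsub)
  have hKK₀ : volume K ≤ volume K₀ := measure_mono subset_union_left
  have hLL₀ : volume L ≤ volume L₀ := measure_mono subset_union_left
  have hcoef : ENNReal.ofReal l + ENNReal.ofReal (1 - l) = 1 := by
    rw [← ENNReal.ofReal_add hl0.le (by linarith)]
    norm_num
  calc ENNReal.ofReal l * volume A' + ENNReal.ofReal (1 - l) * volume B'
      ≤ ENNReal.ofReal l * (volume K₀ + ε / 2)
        + ENNReal.ofReal (1 - l) * (volume L₀ + ε / 2) := by
        gcongr
        · exact (hKv.le).trans (by gcongr)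
        · exact (hLv.le).trans (by gcongr)
    _ = (ENNReal.ofReal l * volume K₀ + ENNReal.ofReal (1 - l) * volume L₀)
        + (ENNReal.ofReal l + ENNReal.ofReal (1 - l)) * ((ε : ℝ≥0∞) / 2) := by ring
    _ ≤ volume S + 1 * ((ε : ℝ≥0∞) / 2) := by
        rw [hcoef]
        gcongr
    _ ≤ volume S + ε := by
        rw [one_mul]
        gcongr
        exact ENNReal.half_le_self

lemma exists_meas_subset_level (f : ℝ → ℝ) (hf : AEMeasurable f (volume : Measure ℝ))
    (s : ℝ) :
    ∃ A' : Set ℝ, MeasurableSet A' ∧ A' ⊆ {x | s < f x} ∧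
      volume A' = volume {x | s < f x} := by
  set g := hf.mk f with hg_def
  have hg : Measurable g := hf.measurable_mk
  have hfg : f =ᵐ[volume] g := hf.ae_eq_mk
  set N := toMeasurable volume {x | f x ≠ g x} with hN_def
  have hNnull : volume N = 0 := by
    rw [hN_def, measure_toMeasurable]
    exact ae_iff.1 hfg
  refine ⟨{x | s < g x} \ N, ((measurableSet_lt measurable_const hg)).diff
    (measurableSet_toMeasurable _ _), ?_, ?_⟩
  · rintro x ⟨hx1, hx2⟩
    have : f x = g x := by
      by_contra hne
      exact hx2 (subset_toMeasurable _ _ hne)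
    simpa [this] using hx1
  · rw [measure_diff_null hNnull]
    exact measure_congr (hfg.mono fun x hx => by change (s < g x) = (s < f x); rw [hx])

/-- One-dimensional Prékopa–Leindler inequality for bounded integrable functions. -/
lemma prekopa_leindler_dim1 (f g h : ℝ → ℝ)
    (hf0 : ∀ x, 0 ≤ f x) (hg0 : ∀ x, 0 ≤ g x) (hh0 : ∀ x, 0 ≤ h x)
    (hfi : Integrable f) (hgi : Integrable g) (hhi : Integrable h)
    (hfb : BddAbove (Set.range f)) (hgb : BddAbove (Set.range g))
    {l : ℝ} (hl0 : 0 < l) (hl1 : l < 1)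
    (hyp : ∀ x y : ℝ, f x ^ l * g y ^ (1 - l) ≤ h (l * x + (1 - l) * y)) :
    (∫ x, f x) ^ l * (∫ x, g x) ^ (1 - l) ≤ ∫ x, h x := by
  have hl1' : (0:ℝ) < 1 - l := by linarith
  by_cases hSf : ∃ x, 0 < f x
  case neg =>
    push_neg at hSf
    have hfz : f = fun _ => (0:ℝ) := funext fun x => le_antisymm (hSf x) (hf0 x)
    rw [hfz]
    simp [Real.zero_rpow hl0.ne']
    exact integral_nonneg hh0
  by_cases hSg : ∃ x, 0 < g x
  case neg =>
    push_neg at hSg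
    have hgz : g = fun _ => (0:ℝ) := funext fun x => le_antisymm (hSg x) (hg0 x)
    rw [hgz]
    simp [Real.zero_rpow hl1'.ne']
    exact integral_nonneg hh0
  obtain ⟨x₀, hx₀⟩ := hSf
  obtain ⟨y₀, hy₀⟩ := hSg
  set Sf := sSup (Set.range f) with hSf_def
  set Sg := sSup (Set.range g) with hSg_def
  have hSf_pos : 0 < Sf := lt_of_lt_of_le hx₀ (le_csSup hfb ⟨x₀, rfl⟩)
  have hSg_pos : 0 < Sg := lt_of_lt_of_le hy₀ (le_csSup hgb ⟨y₀, rfl⟩)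
  have hfle : ∀ x, f x ≤ Sf := fun x => le_csSup hfb ⟨x, rfl⟩
  have hgle : ∀ x, g x ≤ Sg := fun x => le_csSup hgb ⟨x, rfl⟩
  set C := Sf ^ l * Sg ^ (1 - l) with hC_def
  have hC_pos : 0 < C := mul_pos (Real.rpow_pos_of_pos hSf_pos _)
    (Real.rpow_pos_of_pos hSg_pos _)
  -- the key superlevel-set inequality
  have key : ∀ t ∈ Ioi (0:ℝ),
      ENNReal.ofReal l * volume {x | t * Sf < f x}
        + ENNReal.ofReal (1 - l) * volume {x | t * Sg < g x}
      ≤ volume {x | t * C < h x} := by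
    intro t ht
    rw [mem_Ioi] at ht
    rcases lt_or_ge t 1 with ht1 | ht1
    · -- nontrivial regime
      set A := {x | t * Sf < f x} with hA_def
      set B := {x | t * Sg < g x} with hB_def
      have hAne : A.Nonempty := by
        obtain ⟨z, ⟨x, rfl⟩, hz⟩ := exists_lt_of_lt_csSup (Set.range_nonempty f)
          (show t * Sf < Sf by nlinarith)
        exact ⟨x, hz⟩
      have hBne : B.Nonempty := by
        obtain ⟨z, ⟨x, rfl⟩, hz⟩ := exists_lt_of_lt_csSup (Set.range_nonempty g)
          (show t * Sg < Sg by nlinarith)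
        exact ⟨x, hz⟩
      have hS : ∀ a ∈ A, ∀ b ∈ B, l * a + (1 - l) * b ∈ {x | t * C < h x} := by
        intro a ha b hb
        have htSf : 0 < t * Sf := by positivity
        have htSg : 0 < t * Sg := by positivity
        have hfa : t * Sf < f a := ha
        have hgb : t * Sg < g b := hb
        have heq : (t * Sf) ^ l * (t * Sg) ^ (1 - l) = t * C := by
          rw [Real.mul_rpow ht.le hSf_pos.le, Real.mul_rpow ht.le hSg_pos.le, hC_def]
          have : t ^ l * t ^ (1 - l) = t := by
            rw [← Real.rpow_add ht]; norm_num
          calc t ^ l * Sf ^ l * (t ^ (1 - l) * Sg ^ (1 - l))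
              = (t ^ l * t ^ (1 - l)) * (Sf ^ l * Sg ^ (1 - l)) := by ring
            _ = t * (Sf ^ l * Sg ^ (1 - l)) := by rw [this]
        have hstrict : (t * Sf) ^ l * (t * Sg) ^ (1 - l) < f a ^ l * g b ^ (1 - l) := by
          apply mul_lt_mul''
          · exact Real.rpow_lt_rpow htSf.le hfa hl0
          · exact Real.rpow_lt_rpow htSg.le hgb hl1'
          · positivity
          · positivity
        have : t * C < f a ^ l * g b ^ (1 - l) := by rw [← heq]; exact hstrict
        exact lt_of_lt_of_le this (hyp a b)
      obtain ⟨A', hA'm, hA'sub, hA'vol⟩ :=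
        exists_meas_subset_level f hfi.aemeasurable (t * Sf)
      obtain ⟨B', hB'm, hB'sub, hB'vol⟩ :=
        exists_meas_subset_level g hgi.aemeasurable (t * Sg)
      have hA'f : volume A' ≠ ⊤ := by
        rw [hA'vol]
        exact (hfi.measure_gt_lt_top (by positivity : (0:ℝ) < t * Sf)).ne
      have hB'f : volume B' ≠ ⊤ := by
        rw [hB'vol]
        exact (hgi.measure_gt_lt_top (by positivity : (0:ℝ) < t * Sg)).ne
      calc ENNReal.ofReal l * volume A + ENNReal.ofReal (1 - l) * volume B
          = ENNReal.ofReal l * volume A' + ENNReal.ofReal (1 - l) * volume B' := by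
            rw [hA'vol, hB'vol]
        _ ≤ volume {x | t * C < h x} :=
            superadd_volume hl0 hl1 A B _ hAne hBne hS A' B' hA'sub hB'sub
              hA'm hB'm hA'f hB'f
    · -- t ≥ 1 : superlevel sets are empty
      have hAe : {x | t * Sf < f x} = ∅ := by
        ext x; simp only [mem_setOf_eq, mem_empty_iff_false, iff_false, not_lt]
        calc f x ≤ Sf := hfle x
          _ ≤ t * Sf := by nlinarith
      have hBe : {x | t * Sg < g x} = ∅ := by
        ext x; simp only [mem_setOf_eq, mem_empty_iff_false, iff_false, not_lt]
        calc g x ≤ Sg := hgle x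
          _ ≤ t * Sg := by nlinarith
      rw [hAe, hBe]
      simp
  -- layer cake computations
  have layer : ∀ (φ : ℝ → ℝ) (S : ℝ), Integrable φ → (∀ x, 0 ≤ φ x) → 0 < S →
      (∫⁻ t in Ioi (0:ℝ), volume {x | t * S < φ x})
        = ENNReal.ofReal ((∫ x, φ x) / S) := by
    intro φ S hφi hφ0 hS
    have h1 : ∀ t : ℝ, {x | t * S < φ x} = {x | t < φ x / S} := by
      intro t; ext x; rw [mem_setOf_eq, mem_setOf_eq, lt_div_iff₀ hS]
    simp_rw [h1]
    rw [← lintegral_eq_lintegral_meas_lt volume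
      (Filter.Eventually.of_forall fun x => div_nonneg (hφ0 x) hS.le)
      ((hφi.aemeasurable).div_const S)]
    rw [← ofReal_integral_eq_lintegral_ofReal (hφi.div_const S)
      (Filter.Eventually.of_forall fun x => div_nonneg (hφ0 x) hS.le)]
    congr 1
    exact integral_div S φ
  have lcf := layer f Sf hfi hf0 hSf_pos
  have lcg := layer g Sg hgi hg0 hSg_pos
  have lch := layer h C hhi hh0 hC_pos
  -- measurability of the superlevel measures
  have meas_mono : ∀ (φ : ℝ → ℝ) (S : ℝ), 0 < S →
      Measurable fun t : ℝ => volume {x | t * S < φ x} := by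
    intro φ S hS
    apply Antitone.measurable
    intro s t hst
    apply measure_mono
    intro x hx
    rw [mem_setOf_eq] at hx ⊢
    nlinarith
  have hmf := meas_mono f Sf hSf_pos
  have hmg := meas_mono g Sg hSg_pos
  -- combine
  have main : ENNReal.ofReal l * ENNReal.ofReal ((∫ x, f x) / Sf)
      + ENNReal.ofReal (1 - l) * ENNReal.ofReal ((∫ x, g x) / Sg)
      ≤ ENNReal.ofReal ((∫ x, h x) / C) := by
    rw [← lcf, ← lcg, ← lch]
    rw [← lintegral_const_mul' _ _ ENNReal.ofReal_ne_top,
      ← lintegral_const_mul' _ _ ENNReal.ofReal_ne_top,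
      ← lintegral_add_left (hmf.const_mul _)]
    exact setLIntegral_mono ((meas_mono h C hC_pos)) key
  -- translate back to reals
  have hIf : 0 ≤ ∫ x, f x := integral_nonneg hf0
  have hIg : 0 ≤ ∫ x, g x := integral_nonneg hg0
  have hIh : 0 ≤ ∫ x, h x := integral_nonneg hh0
  have main2 : l * ((∫ x, f x) / Sf) + (1 - l) * ((∫ x, g x) / Sg)
      ≤ (∫ x, h x) / C := by
    rw [← ENNReal.ofReal_mul hl0.le, ← ENNReal.ofReal_mul hl1'.le,
      ← ENNReal.ofReal_add (by positivity) (by positivity)] at main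
    exact (ENNReal.ofReal_le_ofReal_iff (by positivity)).1 main
  have amgm : ((∫ x, f x) / Sf) ^ l * ((∫ x, g x) / Sg) ^ (1 - l)
      ≤ l * ((∫ x, f x) / Sf) + (1 - l) * ((∫ x, g x) / Sg) :=
    Real.geom_mean_le_arith_mean2_weighted hl0.le hl1'.le (by positivity)
      (by positivity) (by ring)
  have final : ((∫ x, f x) / Sf) ^ l * ((∫ x, g x) / Sg) ^ (1 - l) * C ≤ ∫ x, h x := by
    rw [← le_div_iff₀ hC_pos]
    exact amgm.trans main2
  calc (∫ x, f x) ^ l * (∫ x, g x) ^ (1 - l)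
      = ((∫ x, f x) / Sf) ^ l * ((∫ x, g x) / Sg) ^ (1 - l) * C := by
        rw [Real.div_rpow hIf hSf_pos.le, Real.div_rpow hIg hSg_pos.le, hC_def]
        field_simp
    _ ≤ ∫ x, h x := final
/-- The convolution of two integrable log-concave nonnegative functions on `ℝ`
is log-concave. -/
theorem convolution_logConcave (p q : ℝ → ℝ)
    (hp_nonneg : ∀ x, 0 ≤ p x) (hq_nonneg : ∀ x, 0 ≤ q x)
    (hp_int : Integrable p) (hq_int : Integrable q)
    (hp : ∀ a b : ℝ, ∀ l : ℝ, 0 ≤ l → l ≤ 1 →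
        (p a) ^ l * (p b) ^ (1 - l) ≤ p (l * a + (1 - l) * b))
    (hq : ∀ a b : ℝ, ∀ l : ℝ, 0 ≤ l → l ≤ 1 →
        (q a) ^ l * (q b) ^ (1 - l) ≤ q (l * a + (1 - l) * b))
    (r : ℝ → ℝ)
    (hr : ∀ x, r x = ∫ y, p (x - y) * q y) :
    ∀ a b : ℝ, ∀ l : ℝ, 0 ≤ l → l ≤ 1 →
      (r a) ^ l * (r b) ^ (1 - l) ≤ r (l * a + (1 - l) * b) := by
  intro a b l hl0 hl1
  rcases eq_or_lt_of_le hl0 with hl0' | hl0'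
  · -- l = 0
    rw [← hl0']
    norm_num
  rcases eq_or_lt_of_le hl1 with hl1' | hl1'
  · -- l = 1
    rw [hl1']
    norm_num
  -- 0 < l < 1
  obtain ⟨Mp, hMp0, hMp⟩ := logconcave_bounded p hp_nonneg hp_int hp
  obtain ⟨Mq, hMq0, hMq⟩ := logconcave_bounded q hq_nonneg hq_int hq
  have aux_int : ∀ c : ℝ, Integrable (fun y => p (c - y) * q y) := by
    intro c
    refine Integrable.mono' (hq_int.const_mul Mp)
      (((hp_int.comp_sub_left c).aestronglyMeasurable).mul hq_int.aestronglyMeasurable)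
      (Filter.Eventually.of_forall fun y => ?_)
    rw [Real.norm_eq_abs, abs_of_nonneg (mul_nonneg (hp_nonneg _) (hq_nonneg _))]
    exact mul_le_mul_of_nonneg_right (hMp _) (hq_nonneg y)
  set f : ℝ → ℝ := fun y => p (a - y) * q y with hf_def
  set g : ℝ → ℝ := fun y => p (b - y) * q y with hg_def
  set h : ℝ → ℝ := fun y => p (l * a + (1 - l) * b - y) * q y with hh_def
  have hf0 : ∀ y, 0 ≤ f y := fun y => mul_nonneg (hp_nonneg _) (hq_nonneg _)
  have hg0 : ∀ y, 0 ≤ g y := fun y => mul_nonneg (hp_nonneg _) (hq_nonneg _)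
  have hh0 : ∀ y, 0 ≤ h y := fun y => mul_nonneg (hp_nonneg _) (hq_nonneg _)
  have hfb : BddAbove (Set.range f) := by
    refine ⟨Mp * Mq, ?_⟩
    rintro z ⟨y, rfl⟩
    exact mul_le_mul (hMp _) (hMq _) (hq_nonneg y) hMp0
  have hgb : BddAbove (Set.range g) := by
    refine ⟨Mp * Mq, ?_⟩
    rintro z ⟨y, rfl⟩
    exact mul_le_mul (hMp _) (hMq _) (hq_nonneg y) hMp0
  have hyp : ∀ x y : ℝ, f x ^ l * g y ^ (1 - l) ≤ h (l * x + (1 - l) * y) := by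
    intro x y
    have he : l * a + (1 - l) * b - (l * x + (1 - l) * y)
        = l * (a - x) + (1 - l) * (b - y) := by ring
    have h1 : p (a - x) ^ l * p (b - y) ^ (1 - l)
        ≤ p (l * a + (1 - l) * b - (l * x + (1 - l) * y)) := by
      rw [he]; exact hp (a - x) (b - y) l hl0 hl1
    have h2 : q x ^ l * q y ^ (1 - l) ≤ q (l * x + (1 - l) * y) :=
      hq x y l hl0 hl1
    calc f x ^ l * g y ^ (1 - l)
        = (p (a - x) ^ l * p (b - y) ^ (1 - l)) * (q x ^ l * q y ^ (1 - l)) := by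
          rw [hf_def, hg_def]
          simp only
          rw [Real.mul_rpow (hp_nonneg _) (hq_nonneg _),
            Real.mul_rpow (hp_nonneg _) (hq_nonneg _)]
          ring
      _ ≤ p (l * a + (1 - l) * b - (l * x + (1 - l) * y)) * q (l * x + (1 - l) * y) := by
          exact mul_le_mul h1 h2 (mul_nonneg (Real.rpow_nonneg (hq_nonneg x) l)
            (Real.rpow_nonneg (hq_nonneg y) (1 - l))) (hp_nonneg _)
      _ = h (l * x + (1 - l) * y) := rfl
  have := prekopa_leindler_dim1 f g h hf0 hg0 hh0 (aux_int a) (aux_int b)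
    (aux_int _) hfb hgb hl0' hl1' hyp
  rw [hr a, hr b, hr (l * a + (1 - l) * b)]
  exact this
end

section
/- Let (X_t)_{t≥0} be integrable real random variables with laws (μ_t) and integrated survival function C_μ(t,x) = E[(X_t - x)⁺]. If C_μ is TP₂ on ℝ≥0 × ℝ (i.e., C_μ(t₁,x₁)C_μ(t₂,x₂) ≥ C_μ(t₁,x₂)C_μ(t₂,x₁) for all t₁ ≤ t₂, x₁ ≤ x₂), then for every x ∈ ℝ, the map t ↦ C_μ(t,x) is non-decreasing. -/
open MeasureTheory Set

/-- If the integrated survival function `C(t,x) = E[(X_t - x)⁺]` of a family of integrable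
random variables is TP₂ on `ℝ≥0 × ℝ`, then `t ↦ C(t,x)` is non-decreasing for every `x`. -/
theorem tp2_implies_increasing_convex_order {Ω : Type*} [MeasurableSpace Ω]
    (P : Measure Ω) [IsProbabilityMeasure P]
    (X : ℝ → Ω → ℝ)
    (hmeas : ∀ t, 0 ≤ t → Measurable (X t))
    (hint : ∀ t, 0 ≤ t → Integrable (X t) P)
    (C : ℝ → ℝ → ℝ)
    (hC : ∀ t, 0 ≤ t → ∀ x : ℝ, C t x = ∫ ω, max (X t ω - x) 0 ∂P)
    (hTP2 : ∀ t₁ t₂ : ℝ, 0 ≤ t₁ → t₁ ≤ t₂ → ∀ x₁ x₂ : ℝ, x₁ ≤ x₂ →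
        C t₁ x₂ * C t₂ x₁ ≤ C t₁ x₁ * C t₂ x₂) :
    ∀ x : ℝ, ∀ s t : ℝ, 0 ≤ s → s ≤ t → C s x ≤ C t x := by
  intro x s t hs hst
  have ht : 0 ≤ t := hs.trans hst
  by_contra hlt
  push_neg at hlt
  have hintS := hint s hs
  have hintT := hint t ht
  have hmax : ∀ u, 0 ≤ u → ∀ z : ℝ, Integrable (fun ω => max (X u ω - z) 0) P := by
    intro u hu z
    exact ((hint u hu).sub (integrable_const z)).pos_part
  have hmaxS : Integrable (fun ω => max (X s ω) 0) P := hintS.pos_part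
  have hCnonneg : ∀ u, 0 ≤ u → ∀ z, 0 ≤ C u z := by
    intro u hu z
    rw [hC u hu z]
    exact integral_nonneg fun ω => le_max_right _ _
  set a := C s x with ha
  set b := C t x with hb
  set A := ∫ ω, max (X s ω) 0 ∂P with hA
  set B := ∫ ω, X t ω ∂P with hB
  -- lower bound for C t z
  have hlow : ∀ z : ℝ, B - z ≤ C t z := by
    intro z
    rw [hC t ht z]
    have h1 : B - z = ∫ ω, X t ω - z ∂P := by
      rw [integral_sub hintT (integrable_const z), integral_const]; simp [hB]
    rw [h1]
    exact integral_mono (hintT.sub (integrable_const z)) (hmax t ht z)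
      fun ω => le_max_left _ _
  -- upper bound for C s z when z ≤ 0
  have hup : ∀ z : ℝ, z ≤ 0 → C s z ≤ A - z := by
    intro z hz
    rw [hC s hs z]
    have h1 : A - z = ∫ ω, max (X s ω) 0 - z ∂P := by
      rw [integral_sub hmaxS (integrable_const z), integral_const]; simp [hA]
    rw [h1]
    refine integral_mono (hmax s hs z) (hmaxS.sub (integrable_const z)) fun ω => ?_
    have h2 := le_max_left (X s ω) 0
    have h3 := le_max_right (X s ω) 0
    exact max_le (by linarith) (by linarith)
  have hba : b - a < 0 := by linarith
  set z := min (min x 0) ((A * b - a * B + 1) / (b - a)) with hz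
  have hzx : z ≤ x := le_trans (min_le_left _ _) (min_le_left _ _)
  have hz0 : z ≤ 0 := le_trans (min_le_left _ _) (min_le_right _ _)
  have hzq : z ≤ (A * b - a * B + 1) / (b - a) := min_le_right _ _
  have hz2' : A * b - a * B + 1 ≤ (b - a) * z := by
    rw [le_div_iff_of_neg hba] at hzq
    linarith [hzq]
  have key : a * (B - z) ≤ (A - z) * b := by
    have k1 : a * (B - z) ≤ a * C t z :=
      mul_le_mul_of_nonneg_left (hlow z) (hCnonneg s hs x)
    have k2 : a * C t z ≤ C s z * b := hTP2 s t hs hst z x hzx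
    have k3 : C s z * b ≤ (A - z) * b :=
      mul_le_mul_of_nonneg_right (hup z hz0) (hCnonneg t ht x)
    linarith
  nlinarith [key, hz2']
end

section
/- Let (X_t)_{t≥0} be integrable real random variables with laws μ_t, and let Ψ_{μ_t}(x) = x + (1/μ_t([x,∞))) ∫_{[x,∞)} (y-x) μ_t(dy) for x < b_{μ_t}, Ψ_{μ_t}(x) = x otherwise, be the Hardy–Littlewood functions. Then t ↦ Ψ_{μ_t}(x) is non-decreasing for every x ∈ ℝ (i.e., (X_t) increases in the MRL order) if and only if the integrated survival function C_μ(t,x) = E[(X_t - x)⁺] is TP₂ on ℝ≥0 × ℝ. -/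
open MeasureTheory Set Filter Topology

noncomputable def Cf (ν : Measure ℝ) (x : ℝ) : ℝ := ∫ y, max (y - x) 0 ∂ν

section aux

variable {ν : Measure ℝ} [IsProbabilityMeasure ν]

lemma intCf (hν : Integrable (fun y : ℝ => y) ν) (x : ℝ) :
    Integrable (fun y => max (y - x) 0) ν :=
  (hν.sub (integrable_const x)).pos_part

lemma Cf_nonneg (ν : Measure ℝ) (x : ℝ) : 0 ≤ Cf ν x :=
  integral_nonneg fun y => le_max_right _ _

lemma Cf_anti (hν : Integrable (fun y : ℝ => y) ν) {u v : ℝ} (huv : u ≤ v) :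
    Cf ν v ≤ Cf ν u :=
  integral_mono (intCf hν v) (intCf hν u) fun y => max_le_max (by linarith) le_rfl

lemma Cf_cont (hν : Integrable (fun y : ℝ => y) ν) :
    Continuous (Cf ν) := by
  have : LipschitzWith 1 (Cf ν) := by
    apply LipschitzWith.of_dist_le_mul
    intro a b
    rw [Real.dist_eq, Real.dist_eq, NNReal.coe_one, one_mul]
    have h1 : Cf ν a - Cf ν b = ∫ y, (max (y - a) 0 - max (y - b) 0) ∂ν :=
      (integral_sub (intCf hν a) (intCf hν b)).symm
    rw [h1]
    calc |∫ y, (max (y - a) 0 - max (y - b) 0) ∂ν|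
        ≤ ∫ y, |max (y - a) 0 - max (y - b) 0| ∂ν := by
          simpa [Real.norm_eq_abs] using
            norm_integral_le_integral_norm (fun y => max (y - a) 0 - max (y - b) 0) (μ := ν)
      _ ≤ ∫ _, |a - b| ∂ν := by
          apply integral_mono ((intCf hν a).sub (intCf hν b)).abs (integrable_const _)
          intro y
          calc |max (y - a) 0 - max (y - b) 0| ≤ |(y - a) - (y - b)| :=
                abs_max_sub_max_le_abs _ _ _
            _ = |a - b| := by rw [show (y - a) - (y - b) = -(a - b) by ring, abs_neg]
      _ = |a - b| := by simp
  exact this.continuous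

lemma Cf_zero {x : ℝ} (h : ν (Ici x) = 0) : Cf ν x = 0 := by
  have h' : ∀ᵐ y ∂ν, y ∉ Ici x := measure_eq_zero_iff_ae_notMem.mp h
  apply integral_eq_zero_of_ae
  filter_upwards [h'] with y hy
  simp only [mem_Ici, not_le] at hy
  simp [max_eq_right (by linarith : y - x ≤ 0)]

lemma Cf_setInt (hν : Integrable (fun y : ℝ => y) ν) (x : ℝ) :
    ∫ y in Ici x, (y - x) ∂ν = Cf ν x := by
  have h1 : Cf ν x = (∫ y in Ici x, max (y - x) 0 ∂ν) + ∫ y in (Ici x)ᶜ, max (y - x) 0 ∂ν :=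
    (integral_add_compl measurableSet_Ici (intCf hν x)).symm
  have h2 : ∫ y in (Ici x)ᶜ, max (y - x) 0 ∂ν = 0 := by
    rw [compl_Ici]
    rw [setIntegral_congr_fun measurableSet_Iio
      (fun y (hy : y ∈ Iio x) => max_eq_right (by simp at hy; linarith : y - x ≤ 0))]
    simp
  have h3 : ∫ y in Ici x, max (y - x) 0 ∂ν = ∫ y in Ici x, (y - x) ∂ν :=
    setIntegral_congr_fun measurableSet_Ici
      (fun y (hy : y ∈ Ici x) => max_eq_left (by simp at hy; linarith : (0:ℝ) ≤ y - x))
  rw [h1, h2, h3, add_zero]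

lemma Cf_ge (hν : Integrable (fun y : ℝ => y) ν) (x : ℝ) :
    (∫ y, y ∂ν) - x ≤ Cf ν x := by
  have h : (∫ y, y ∂ν) - x = ∫ y, (y - x) ∂ν := by
    rw [integral_sub hν (integrable_const x), integral_const]; simp
  rw [h]
  exact integral_mono (hν.sub (integrable_const x)) (intCf hν x) fun y => le_max_left _ _


/-- Dominated convergence core for slope limits of `Cf`. -/
lemma Cf_slope_core (hν : Integrable (fun y : ℝ => y) ν) (x : ℝ)
    {l : Filter ℝ} [l.IsCountablyGenerated] (hl : ∀ᶠ v in l, v ≠ x)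
    {S : Set ℝ} (hS : MeasurableSet S)
    (hlim : ∀ y : ℝ, Tendsto (fun v => (max (y - v) 0 - max (y - x) 0) / (v - x)) l
      (𝓝 (-S.indicator (fun _ => (1:ℝ)) y))) :
    Tendsto (fun v => (Cf ν v - Cf ν x) / (v - x)) l (𝓝 (-(ν S).toReal)) := by
  have key : Tendsto (fun v => ∫ y, (max (y - v) 0 - max (y - x) 0) / (v - x) ∂ν) l
      (𝓝 (∫ y, -S.indicator (fun _ => (1:ℝ)) y ∂ν)) := by
    apply tendsto_integral_filter_of_dominated_convergence (fun _ => (1:ℝ))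
    · filter_upwards with v
      exact (Continuous.div_const (by fun_prop) _).aestronglyMeasurable
    · filter_upwards [hl] with v hv
      filter_upwards with y
      rw [Real.norm_eq_abs, abs_div]
      apply div_le_one_of_le₀ _ (abs_nonneg _)
      calc |max (y - v) 0 - max (y - x) 0| ≤ |(y - v) - (y - x)| := abs_max_sub_max_le_abs _ _ _
        _ = |v - x| := by rw [show (y - v) - (y - x) = -(v - x) by ring, abs_neg]
    · exact integrable_const 1
    · filter_upwards with y; exact hlim y
  have heq : ∫ y, -S.indicator (fun _ => (1:ℝ)) y ∂ν = -(ν S).toReal := by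
    rw [integral_neg, integral_indicator_const _ hS]; simp; rfl
  rw [heq] at key
  apply key.congr'
  filter_upwards [hl] with v hv
  rw [integral_div, integral_sub (intCf hν v) (intCf hν x)]; rfl

lemma Cf_rderiv (hν : Integrable (fun y : ℝ => y) ν) (x : ℝ) :
    HasDerivWithinAt (Cf ν) (-(ν (Ioi x)).toReal) (Ici x) x := by
  rw [hasDerivWithinAt_iff_tendsto_slope, Ici_sdiff_left]
  have hl : ∀ᶠ v in 𝓝[>] x, v ≠ x := by
    filter_upwards [eventually_mem_nhdsWithin] with v hv
    exact ne_of_gt hv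
  have := Cf_slope_core hν x hl measurableSet_Ioi (l := 𝓝[>] x) (S := Ioi x) ?_
  · apply this.congr'
    filter_upwards with v
    rw [slope_def_field]
  · intro y
    by_cases hy : x < y
    · have hev : ∀ᶠ v in 𝓝[>] x, (max (y - v) 0 - max (y - x) 0) / (v - x) = -1 := by
        filter_upwards [eventually_mem_nhdsWithin,
          eventually_nhdsWithin_of_eventually_nhds (eventually_lt_nhds hy)] with v hv1 hv2
        rw [max_eq_left (by linarith : (0:ℝ) ≤ y - v),
          max_eq_left (by linarith : (0:ℝ) ≤ y - x)]
        rw [div_eq_iff (by simp only [mem_Ioi] at hv1; linarith : v - x ≠ 0)]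
        ring
      have : -Set.indicator (Ioi x) (fun _ => (1:ℝ)) y = -1 := by
        simp [Set.indicator_of_mem (mem_Ioi.2 hy)]
      rw [this]
      exact tendsto_const_nhds.congr' (hev.mono fun v h => h.symm)
    · push_neg at hy
      have hev : ∀ᶠ v in 𝓝[>] x, (max (y - v) 0 - max (y - x) 0) / (v - x) = 0 := by
        filter_upwards [eventually_mem_nhdsWithin] with v hv1
        simp only [mem_Ioi] at hv1
        rw [max_eq_right (by linarith : y - v ≤ 0), max_eq_right (by linarith : y - x ≤ 0)]
        simp
      have : -Set.indicator (Ioi x) (fun _ => (1:ℝ)) y = 0 := by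
        simp [Set.indicator_of_notMem (by simpa using hy : y ∉ Ioi x)]
      rw [this]
      exact tendsto_const_nhds.congr' (hev.mono fun v h => h.symm)

lemma Cf_lslope (hν : Integrable (fun y : ℝ => y) ν) (x : ℝ) :
    Tendsto (fun v => (Cf ν v - Cf ν x) / (v - x)) (𝓝[<] x) (𝓝 (-(ν (Ici x)).toReal)) := by
  have hl : ∀ᶠ v in 𝓝[<] x, v ≠ x := by
    filter_upwards [eventually_mem_nhdsWithin] with v hv
    exact ne_of_lt hv
  apply Cf_slope_core hν x hl measurableSet_Ici
  intro y
  by_cases hy : x ≤ y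
  · have hev : ∀ᶠ v in 𝓝[<] x, (max (y - v) 0 - max (y - x) 0) / (v - x) = -1 := by
      filter_upwards [eventually_mem_nhdsWithin] with v hv1
      simp only [mem_Iio] at hv1
      rw [max_eq_left (by linarith : (0:ℝ) ≤ y - v),
        max_eq_left (by linarith : (0:ℝ) ≤ y - x)]
      rw [div_eq_iff (by linarith : v - x ≠ 0)]
      ring
    have : -Set.indicator (Ici x) (fun _ => (1:ℝ)) y = -1 := by
      simp [Set.indicator_of_mem (mem_Ici.2 hy)]
    rw [this]
    exact tendsto_const_nhds.congr' (hev.mono fun v h => h.symm)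
  · push_neg at hy
    have hev : ∀ᶠ v in 𝓝[<] x, (max (y - v) 0 - max (y - x) 0) / (v - x) = 0 := by
      filter_upwards [eventually_mem_nhdsWithin,
        eventually_nhdsWithin_of_eventually_nhds (eventually_gt_nhds hy)] with v hv1 hv2
      rw [max_eq_right (by linarith : y - v ≤ 0), max_eq_right (by linarith : y - x ≤ 0)]
      simp
    have : -Set.indicator (Ici x) (fun _ => (1:ℝ)) y = 0 := by
      simp [Set.indicator_of_notMem (by simpa using hy : y ∉ Ici x)]
    rw [this]
    exact tendsto_const_nhds.congr' (hev.mono fun v h => h.symm)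

lemma meas_Ici_tendsto (ν : Measure ℝ) [IsProbabilityMeasure ν] (u : ℝ) :
    Tendsto (fun n : ℕ => (ν (Ici (u + 1 / (n + 1)))).toReal) atTop (𝓝 ((ν (Ioi u)).toReal)) := by
  have hmono : Monotone (fun n : ℕ => Ici (u + 1 / (n + 1 : ℝ))) := by
    intro n m hnm
    apply Ici_subset_Ici.2
    have h1 : (0:ℝ) < n + 1 := by positivity
    have h2 : (n : ℝ) + 1 ≤ (m : ℝ) + 1 := by exact_mod_cast by omega
    have := one_div_le_one_div_of_le h1 h2
    linarith
  have hU : ⋃ n : ℕ, Ici (u + 1 / (n + 1 : ℝ)) = Ioi u := by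
    ext y
    simp only [mem_iUnion, mem_Ici, mem_Ioi]
    constructor
    · rintro ⟨n, hn⟩
      have : (0:ℝ) < 1 / (n + 1) := by positivity
      linarith
    · intro hy
      obtain ⟨n, hn⟩ := exists_nat_one_div_lt (by linarith : (0:ℝ) < y - u)
      exact ⟨n, by linarith⟩
  have := tendsto_measure_iUnion_atTop (μ := ν) hmono
  rw [hU] at this
  exact (ENNReal.tendsto_toReal (measure_ne_top ν _)).comp this

end aux

/-- A family of integrable probability measures `(μ_t)` increases in the mean residual life
order (its Hardy–Littlewood functions are pointwise non-decreasing in `t`) if and only if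
its integrated survival function `C(t,x) = ∫ (y - x)⁺ μ_t(dy)` is TP₂ on `ℝ≥0 × ℝ`. -/
theorem mrl_order_iff_tp2 (μ : ℝ → Measure ℝ)
    (hprob : ∀ t, 0 ≤ t → IsProbabilityMeasure (μ t))
    (hint : ∀ t, 0 ≤ t → Integrable (fun y : ℝ => y) (μ t))
    (Ψ : ℝ → ℝ → ℝ)
    (hΨ : ∀ t, 0 ≤ t → ∀ x : ℝ, Ψ t x =
      if μ t (Set.Ici x) ≠ 0 then
        x + (∫ y in Set.Ici x, (y - x) ∂(μ t)) / (μ t (Set.Ici x)).toReal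
      else x)
    (C : ℝ → ℝ → ℝ)
    (hC : ∀ t, 0 ≤ t → ∀ x : ℝ, C t x = ∫ y, max (y - x) 0 ∂(μ t)) :
    (∀ x : ℝ, ∀ s t : ℝ, 0 ≤ s → s ≤ t → Ψ s x ≤ Ψ t x) ↔
    (∀ t₁ t₂ : ℝ, 0 ≤ t₁ → t₁ ≤ t₂ → ∀ x₁ x₂ : ℝ, x₁ ≤ x₂ →
      C t₁ x₂ * C t₂ x₁ ≤ C t₁ x₁ * C t₂ x₂) := by
  have hΨ' : ∀ t, 0 ≤ t → ∀ x : ℝ, Ψ t x =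
      if μ t (Set.Ici x) ≠ 0 then x + Cf (μ t) x / (μ t (Set.Ici x)).toReal else x := by
    intro t ht x
    haveI := hprob t ht
    rw [hΨ t ht x, Cf_setInt (hint t ht) x]
  have hC' : ∀ t, 0 ≤ t → ∀ x : ℝ, C t x = Cf (μ t) x := hC
  constructor
  · -- MRL ⇒ TP₂
    intro hmrl t₁ t₂ ht₁ h12 x₁ x₂ hx
    have ht₂ : 0 ≤ t₂ := le_trans ht₁ h12
    haveI := hprob t₁ ht₁
    haveI := hprob t₂ ht₂
    have hi₁ := hint t₁ ht₁
    have hi₂ := hint t₂ ht₂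
    rw [hC' t₁ ht₁, hC' t₁ ht₁, hC' t₂ ht₂, hC' t₂ ht₂]
    -- P1 : pointwise inequality with Ici
    have P1 : ∀ u : ℝ, Cf (μ t₁) u * (μ t₂ (Ici u)).toReal ≤
        Cf (μ t₂) u * (μ t₁ (Ici u)).toReal := by
      intro u
      by_cases e1 : μ t₁ (Ici u) = 0
      · simp [Cf_zero e1, e1]
      by_cases e2 : μ t₂ (Ici u) = 0
      · simp [Cf_zero e2, e2]
      have h := hmrl u t₁ t₂ ht₁ h12
      rw [hΨ' t₁ ht₁ u, hΨ' t₂ ht₂ u, if_pos e1, if_pos e2] at h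
      have ha1 : 0 < (μ t₁ (Ici u)).toReal := ENNReal.toReal_pos e1 (measure_ne_top _ _)
      have ha2 : 0 < (μ t₂ (Ici u)).toReal := ENNReal.toReal_pos e2 (measure_ne_top _ _)
      have h' := (div_le_div_iff₀ ha1 ha2).mp (le_of_add_le_add_left h)
      linarith
    -- P1' : pointwise inequality with Ioi
    have P1' : ∀ u : ℝ, Cf (μ t₁) u * (μ t₂ (Ioi u)).toReal ≤
        Cf (μ t₂) u * (μ t₁ (Ioi u)).toReal := by
      intro u
      have hseq : Tendsto (fun n : ℕ => u + 1 / (n + 1 : ℝ)) atTop (𝓝 u) := by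
        have : Tendsto (fun n : ℕ => 1 / ((n : ℝ) + 1)) atTop (𝓝 0) :=
          tendsto_one_div_add_atTop_nhds_zero_nat
        simpa using tendsto_const_nhds.add this
      have T1 : Tendsto (fun n : ℕ =>
          Cf (μ t₁) (u + 1 / (n + 1)) * (μ t₂ (Ici (u + 1 / (n + 1)))).toReal) atTop
          (𝓝 (Cf (μ t₁) u * (μ t₂ (Ioi u)).toReal)) :=
        (((Cf_cont hi₁).tendsto u).comp hseq).mul (meas_Ici_tendsto (μ t₂) u)
      have T2 : Tendsto (fun n : ℕ =>
          Cf (μ t₂) (u + 1 / (n + 1)) * (μ t₁ (Ici (u + 1 / (n + 1)))).toReal) atTop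
          (𝓝 (Cf (μ t₂) u * (μ t₁ (Ioi u)).toReal)) :=
        (((Cf_cont hi₂).tendsto u).comp hseq).mul (meas_Ici_tendsto (μ t₁) u)
      exact le_of_tendsto_of_tendsto' T1 T2 fun n => P1 _
    -- P2 : positivity propagation
    have P2 : ∀ u : ℝ, 0 < Cf (μ t₁) u → 0 < Cf (μ t₂) u := by
      intro u hpos
      have e1 : μ t₁ (Ici u) ≠ 0 := fun h => by rw [Cf_zero h] at hpos; exact lt_irrefl _ hpos
      have ha1 : 0 < (μ t₁ (Ici u)).toReal := ENNReal.toReal_pos e1 (measure_ne_top _ _)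
      have h := hmrl u t₁ t₂ ht₁ h12
      rw [hΨ' t₁ ht₁ u, hΨ' t₂ ht₂ u, if_pos e1] at h
      by_cases e2 : μ t₂ (Ici u) = 0
      · rw [if_neg (not_not_intro e2)] at h
        exact absurd ((add_le_iff_nonpos_right u).mp h) (not_le.2 (div_pos hpos ha1))
      · rw [if_pos e2] at h
        have ha2 : 0 < (μ t₂ (Ici u)).toReal := ENNReal.toReal_pos e2 (measure_ne_top _ _)
        have h1 : 0 < Cf (μ t₂) u / (μ t₂ (Ici u)).toReal :=
          lt_of_lt_of_le (div_pos hpos ha1) (le_of_add_le_add_left h)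
        by_contra hc
        push_neg at hc
        exact absurd h1 (not_lt.2 (div_nonpos_of_nonpos_of_nonneg hc ha2.le))
    -- main TP₂ argument
    by_cases hA2 : Cf (μ t₁) x₂ ≤ 0
    · have h0 : Cf (μ t₁) x₂ = 0 := le_antisymm hA2 (Cf_nonneg _ _)
      rw [h0, zero_mul]
      exact mul_nonneg (Cf_nonneg _ _) (Cf_nonneg _ _)
    push_neg at hA2
    have hApos : ∀ u ∈ Icc x₁ x₂, 0 < Cf (μ t₁) u :=
      fun u hu => lt_of_lt_of_le hA2 (Cf_anti hi₁ hu.2)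
    set H : ℝ → ℝ := fun u => Cf (μ t₂) u / Cf (μ t₁) u with hH
    have hmain : ∀ u ∈ Icc x₁ x₂, H x₁ ≤ H u := by
      set B' : ℝ → ℝ := fun u => ((-(μ t₂ (Ioi u)).toReal) * Cf (μ t₁) u -
          Cf (μ t₂) u * (-(μ t₁ (Ioi u)).toReal)) / (Cf (μ t₁) u) ^ 2 with hB'def
      have g1 : ContinuousOn (fun _ : ℝ => H x₁) (Icc x₁ x₂) := continuousOn_const
      have g2 : ∀ u ∈ Ico x₁ x₂, HasDerivWithinAt (fun _ : ℝ => H x₁)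
          ((fun _ : ℝ => (0:ℝ)) u) (Ici u) u := fun u _ => hasDerivWithinAt_const _ _ _
      have g3 : (fun _ : ℝ => H x₁) x₁ ≤ H x₁ := le_refl _
      have g4 : ContinuousOn H (Icc x₁ x₂) :=
        ((Cf_cont hi₂).continuousOn).div ((Cf_cont hi₁).continuousOn)
          fun u hu => (hApos u hu).ne'
      have g5 : ∀ u ∈ Ico x₁ x₂, HasDerivWithinAt H (B' u) (Ici u) u := fun u hu =>
        (Cf_rderiv hi₂ u).div (Cf_rderiv hi₁ u) (hApos u (Ico_subset_Icc_self hu)).ne'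
      have g6 : ∀ u ∈ Ico x₁ x₂, (fun _ : ℝ => (0:ℝ)) u ≤ B' u := by
        intro u hu
        rw [hB'def]
        apply div_nonneg _ (sq_nonneg _)
        have := P1' u
        nlinarith
      exact image_le_of_deriv_right_le_deriv_boundary g1 g2 g3 g4 g5 g6
    have hfin : H x₁ ≤ H x₂ := hmain x₂ ⟨hx, le_rfl⟩
    rw [hH] at hfin
    have := (div_le_div_iff₀ (hApos x₁ ⟨le_rfl, hx⟩) (hApos x₂ ⟨hx, le_rfl⟩)).mp hfin
    nlinarith
  · -- TP₂ ⇒ MRL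
    intro htp2 x s t hs hst
    have ht : 0 ≤ t := le_trans hs hst
    haveI := hprob s hs
    haveI := hprob t ht
    have hi₁ := hint s hs
    have hi₂ := hint t ht
    rw [hΨ' s hs x, hΨ' t ht x]
    by_cases e1 : μ s (Ici x) = 0
    · rw [if_neg (not_not_intro e1)]
      split_ifs with e2
      · exact le_add_of_nonneg_right (div_nonneg (Cf_nonneg _ _) ENNReal.toReal_nonneg)
      · exact le_rfl
    rw [if_pos e1]
    have ha1 : 0 < (μ s (Ici x)).toReal := ENNReal.toReal_pos e1 (measure_ne_top _ _)
    by_cases e2 : μ t (Ici x) = 0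
    · rw [if_neg (not_not_intro e2)]
      -- show Cf (μ s) x = 0
      have hm : (∫ y, y ∂(μ t)) ≤ x := by
        have hae : ∀ᵐ y ∂(μ t), y ≤ x := by
          filter_upwards [measure_eq_zero_iff_ae_notMem.mp e2] with y hy
          simpa using le_of_not_ge (by simpa using hy)
        calc (∫ y, y ∂(μ t)) ≤ ∫ _, x ∂(μ t) :=
              integral_mono_ae hi₂ (integrable_const x) hae
          _ = x := by simp
      set x' : ℝ := (∫ y, y ∂(μ t)) - 1 with hx'
      have hx'le : x' ≤ x := by rw [hx']; linarith
      have h1 : (1:ℝ) ≤ Cf (μ t) x' := by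
        have := Cf_ge hi₂ x'
        rw [hx'] at this ⊢
        linarith
      have htp := htp2 s t hs hst x' x hx'le
      rw [hC' s hs, hC' s hs, hC' t ht, hC' t ht, Cf_zero e2] at htp
      have hs0 : Cf (μ s) x = 0 := by
        have hn := Cf_nonneg (μ s) x
        nlinarith
      rw [hs0, zero_div, add_zero]
    rw [if_pos e2]
    have ha2 : 0 < (μ t (Ici x)).toReal := ENNReal.toReal_pos e2 (measure_ne_top _ _)
    -- key inequality via left slopes
    have key : Cf (μ s) x * (μ t (Ici x)).toReal ≤ Cf (μ t) x * (μ s (Ici x)).toReal := by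
      have Ts := Cf_lslope hi₁ x
      have Tt := Cf_lslope hi₂ x
      have T1 : Tendsto (fun v => Cf (μ t) x * ((Cf (μ s) v - Cf (μ s) x) / (v - x)))
          (𝓝[<] x) (𝓝 (Cf (μ t) x * (-(μ s (Ici x)).toReal))) := tendsto_const_nhds.mul Ts
      have T2 : Tendsto (fun v => Cf (μ s) x * ((Cf (μ t) v - Cf (μ t) x) / (v - x)))
          (𝓝[<] x) (𝓝 (Cf (μ s) x * (-(μ t (Ici x)).toReal))) := tendsto_const_nhds.mul Tt
      have hev : ∀ᶠ v in 𝓝[<] x,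
          Cf (μ t) x * ((Cf (μ s) v - Cf (μ s) x) / (v - x)) ≤
          Cf (μ s) x * ((Cf (μ t) v - Cf (μ t) x) / (v - x)) := by
        filter_upwards [eventually_mem_nhdsWithin] with v hv
        have hvx : v < x := hv
        have htp := htp2 s t hs hst v x hvx.le
        rw [hC' s hs, hC' s hs, hC' t ht, hC' t ht] at htp
        rw [mul_div_assoc', mul_div_assoc', div_le_div_right_of_neg (by linarith : v - x < 0)]
        nlinarith
      have := le_of_tendsto_of_tendsto T1 T2 hev
      nlinarith
    exact add_le_add_right ((div_le_div_iff₀ ha1 ha2).mpr key) x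
end
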